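/- arXiv:1304.7466 — 3 statements merged into one kernel-verified Lean document; each statement's English description precedes it below -/
import Mathlib

section
/- Fix n ∈ ℕ ∪ {∞}. The n-covers define a pretopology on the category of small categories: (i) for every small category 𝒰 the singleton family {1_𝒰} is an n-cover; (ii) if (φ_i : 𝒱_i → 𝒰)_{i∈I} is an n-cover and ψ : 𝒲 → 𝒰 is any functor, then the family of pullback projections (𝒲 ×_𝒰 𝒱_i → 𝒲)_{i∈I} is an n-cover of 𝒲; (iii) if (φ_i : 𝒱_i → 𝒰)_{i∈I} is an n-cover and for every i the family (φ_{ij} : 𝒱_{ij} → 𝒱_i)_{j∈J_i} is an n-cover of 𝒱_i, then the family of composites (φ_i ∘ φ_{ij})_{i∈I, j∈J_i} is an n-cover of 𝒰. -/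
open CategoryTheory

universe u

/-- `𝒩ₙ(𝒰)`: the set of `n`-simplices of the simplicial nerve of a small category. -/
abbrev NerveSimplices (𝒰 : Type u) [SmallCategory 𝒰] (n : ℕ) : Type u :=
  ComposableArrows 𝒰 n

/-- The map induced by a functor on `n`-simplices of the nerves. -/
def nerveMap {𝒱 𝒰 : Type u} [SmallCategory 𝒱] [SmallCategory 𝒰] (φ : 𝒱 ⥤ 𝒰) {n : ℕ}
    (σ : NerveSimplices 𝒱 n) : NerveSimplices 𝒰 n :=
  σ ⋙ φ

/-- A family of functors `(φᵢ : 𝒱ᵢ ⥤ 𝒰)` is an `n`-cover (`n ∈ ℕ ∪ {∞}`) if for every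
natural number `k ≤ n` the induced maps on `k`-simplices of the nerves are jointly
surjective. -/
def IsNCover (n : ℕ∞) {ι : Type u} {𝒰 : Type u} [SmallCategory 𝒰] (𝒱 : ι → Type u)
    [∀ i, SmallCategory (𝒱 i)] (φ : ∀ i, 𝒱 i ⥤ 𝒰) : Prop :=
  ∀ k : ℕ, (k : ℕ∞) ≤ n → ∀ σ : NerveSimplices 𝒰 k,
    ∃ i, ∃ τ : NerveSimplices (𝒱 i) k, nerveMap (φ i) τ = σ

variable {𝒰 𝒱₁ 𝒱₂ : Type u} [SmallCategory 𝒰] [SmallCategory 𝒱₁] [SmallCategory 𝒱₂]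

/-- The pullback `𝒱₁ ×_𝒰 𝒱₂` of two functors in the category of small categories:
objects are pairs of objects with equal images in `𝒰`, morphisms are pairs of morphisms
with equal images in `𝒰`. -/
structure CatPB (φ₁ : 𝒱₁ ⥤ 𝒰) (φ₂ : 𝒱₂ ⥤ 𝒰) : Type u where
  left : 𝒱₁
  right : 𝒱₂
  eq : φ₁.obj left = φ₂.obj right

instance (φ₁ : 𝒱₁ ⥤ 𝒰) (φ₂ : 𝒱₂ ⥤ 𝒰) : Category (CatPB φ₁ φ₂) where
  Hom A B := { fg : (A.left ⟶ B.left) × (A.right ⟶ B.right) //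
    φ₁.map fg.1 = eqToHom A.eq ≫ φ₂.map fg.2 ≫ eqToHom B.eq.symm }
  id A := ⟨(𝟙 _, 𝟙 _), by simp⟩
  comp {A B C} f g := ⟨(f.1.1 ≫ g.1.1, f.1.2 ≫ g.1.2), by
    rw [Functor.map_comp, Functor.map_comp, f.2, g.2]; simp⟩
  id_comp f := by apply Subtype.ext; simp
  comp_id f := by apply Subtype.ext; simp
  assoc f g h := by apply Subtype.ext; simp

/-- The first projection of the pullback of categories. -/
def pbFst (φ₁ : 𝒱₁ ⥤ 𝒰) (φ₂ : 𝒱₂ ⥤ 𝒰) : CatPB φ₁ φ₂ ⥤ 𝒱₁ where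
  obj A := A.left
  map f := f.1.1

/-- Lift a simplex of `𝒱₁` together with a compatible simplex of `𝒱₂` to the pullback. -/
def pbLift (φ₁ : 𝒱₁ ⥤ 𝒰) (φ₂ : 𝒱₂ ⥤ 𝒰) {k : ℕ} (σ : NerveSimplices 𝒱₁ k)
    (τ : NerveSimplices 𝒱₂ k) (h : τ ⋙ φ₂ = σ ⋙ φ₁) :
    NerveSimplices (CatPB φ₁ φ₂) k where
  obj m := ⟨σ.obj m, τ.obj m, (Functor.congr_obj h m).symm⟩
  map {a b} f := ⟨(σ.map f, τ.map f), by
    have := Functor.congr_hom h.symm f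
    simpa using this⟩
  map_id a := by apply Subtype.ext; simp; exact rfl
  map_comp f g := by apply Subtype.ext; simp; exact rfl

theorem pbLift_fst (φ₁ : 𝒱₁ ⥤ 𝒰) (φ₂ : 𝒱₂ ⥤ 𝒰) {k : ℕ} (σ : NerveSimplices 𝒱₁ k)
    (τ : NerveSimplices 𝒱₂ k) (h : τ ⋙ φ₂ = σ ⋙ φ₁) :
    nerveMap (pbFst φ₁ φ₂) (pbLift φ₁ φ₂ σ τ h) = σ := by
  refine CategoryTheory.Functor.ext (fun m => rfl) (fun a b f => ?_)
  simp [_root_.nerveMap, pbFst, pbLift]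
  exact (Category.id_comp _).symm

/-- Fix `n ∈ ℕ ∪ {∞}`.  The `n`-covers define a pretopology on the category of small
categories:
(i) for every small category `𝒰` the singleton family `{1_𝒰}` is an `n`-cover;
(ii) the family of pullback projections of an `n`-cover along any functor is an `n`-cover;
(iii) the composite of `n`-covers of the members of an `n`-cover is an `n`-cover. -/
theorem statement2 (n : ℕ∞) :
    (∀ (𝒰 : Type u) [SmallCategory 𝒰],
      IsNCover n (fun _ : PUnit.{u + 1} => 𝒰) (fun _ => 𝟭 𝒰)) ∧
    (∀ (𝒰 : Type u) [SmallCategory 𝒰] {ι : Type u} (𝒱 : ι → Type u)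
      [∀ i, SmallCategory (𝒱 i)] (φ : ∀ i, 𝒱 i ⥤ 𝒰), IsNCover n 𝒱 φ →
      ∀ (𝒲 : Type u) [SmallCategory 𝒲] (ψ : 𝒲 ⥤ 𝒰),
        IsNCover n (fun i => CatPB ψ (φ i)) (fun i => pbFst ψ (φ i))) ∧
    (∀ (𝒰 : Type u) [SmallCategory 𝒰] {ι : Type u} (𝒱 : ι → Type u)
      [∀ i, SmallCategory (𝒱 i)] (φ : ∀ i, 𝒱 i ⥤ 𝒰), IsNCover n 𝒱 φ →
      ∀ {κ : ι → Type u} (𝒲 : ∀ i, κ i → Type u) [∀ i j, SmallCategory (𝒲 i j)]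
        (ψ : ∀ i j, 𝒲 i j ⥤ 𝒱 i), (∀ i, IsNCover n (𝒲 i) (ψ i)) →
        IsNCover n (fun p : Σ i, κ i => 𝒲 p.1 p.2) (fun p => ψ p.1 p.2 ⋙ φ p.1)) := by
  refine ⟨?_, ?_, ?_⟩
  · intro 𝒰 _ k _ σ
    exact ⟨PUnit.unit, σ, rfl⟩
  · intro 𝒰 _ ι 𝒱 _ φ hφ 𝒲 _ ψ k hk σ
    obtain ⟨i, τ, hτ⟩ := hφ k hk (nerveMap ψ σ)
    exact ⟨i, pbLift ψ (φ i) σ τ hτ, pbLift_fst ψ (φ i) σ τ hτ⟩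
  · intro 𝒰 _ ι 𝒱 _ φ hφ κ 𝒲 _ ψ hψ k hk σ
    obtain ⟨i, τ, hτ⟩ := hφ k hk σ
    obtain ⟨j, ρ, hρ⟩ := hψ i k hk τ
    refine ⟨⟨i, j⟩, ρ, ?_⟩
    show ρ ⋙ (ψ i j ⋙ φ i) = σ
    rw [← Functor.assoc]
    rw [show ρ ⋙ ψ i j = τ from hρ]
    exact hτ
end

section
/- A graded functor (φ, F) : (𝒱, 𝔟) → (𝒰, 𝔞) between map-graded categories is cartesian with respect to the projection functor Ψ : Map → Cat if and only if: (1) for every V ∈ 𝒱 the map F_V : 𝔟_V → 𝔞_{φ(V)} is a bijection, and (2) for every v : V → V' in 𝒱, B ∈ 𝔟_V, B' ∈ 𝔟_{V'}, the map 𝔟_v(B,B') → 𝔞_{φ(v)}(F(B), F(B')) is an isomorphism of k-modules. -/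
open CategoryTheory

universe u

namespace MapGr

variable (k : Type u) [CommRing k]

/-- A (`k`-linear) map-graded category `(𝒰, 𝔞)`: a set `𝔞_U` of objects over every
`U ∈ 𝒰`, a `k`-module `𝔞_u(B, A)` of morphisms over every `u : U ⟶ U'` in `𝒰`, together
with associative, unital, `k`-bilinear composition maps. -/
structure GradedCat (𝒰 : Type u) [Category.{u} 𝒰] : Type (u + 1) where
  Obj : 𝒰 → Type u
  Hom : ∀ {X Y : 𝒰}, (X ⟶ Y) → Obj X → Obj Y → ModuleCat.{u} k
  comp : ∀ {X Y Z : 𝒰} {f : Y ⟶ Z} {g : X ⟶ Y} {C : Obj X} {B : Obj Y} {A : Obj Z},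
    Hom f B A → Hom g C B → Hom (g ≫ f) C A
  id : ∀ {X : 𝒰} (A : Obj X), Hom (𝟙 X) A A
  comp_add_left : ∀ {X Y Z : 𝒰} {f : Y ⟶ Z} {g : X ⟶ Y} {C : Obj X} {B : Obj Y}
    {A : Obj Z} (x x' : Hom f B A) (y : Hom g C B),
    comp (x + x') y = comp x y + comp x' y
  comp_add_right : ∀ {X Y Z : 𝒰} {f : Y ⟶ Z} {g : X ⟶ Y} {C : Obj X} {B : Obj Y}
    {A : Obj Z} (x : Hom f B A) (y y' : Hom g C B),
    comp x (y + y') = comp x y + comp x y'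
  comp_smul_left : ∀ {X Y Z : 𝒰} {f : Y ⟶ Z} {g : X ⟶ Y} {C : Obj X} {B : Obj Y}
    {A : Obj Z} (r : k) (x : Hom f B A) (y : Hom g C B),
    comp (r • x) y = r • comp x y
  comp_smul_right : ∀ {X Y Z : 𝒰} {f : Y ⟶ Z} {g : X ⟶ Y} {C : Obj X} {B : Obj Y}
    {A : Obj Z} (r : k) (x : Hom f B A) (y : Hom g C B),
    comp x (r • y) = r • comp x y
  comp_id : ∀ {X Y : 𝒰} {f : X ⟶ Y} {B : Obj X} {A : Obj Y} (x : Hom f B A),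
    HEq (comp x (id B)) x
  id_comp : ∀ {X Y : 𝒰} {f : X ⟶ Y} {B : Obj X} {A : Obj Y} (x : Hom f B A),
    HEq (comp (id A) x) x
  assoc : ∀ {W X Y Z : 𝒰} {f : Y ⟶ Z} {g : X ⟶ Y} {h : W ⟶ X} {D : Obj W} {C : Obj X}
    {B : Obj Y} {A : Obj Z} (x : Hom f B A) (y : Hom g C B) (z : Hom h D C),
    HEq (comp (comp x y) z) (comp x (comp y z))

variable {k}
variable {𝒰 : Type u} [Category.{u} 𝒰]

namespace GradedCat

variable (𝔞 : GradedCat k 𝒰)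

/-- Transport of graded morphisms along an equality of underlying morphisms of `𝒰`. -/
def Hcast {X Y : 𝒰} {f g : X ⟶ Y} (h : f = g) {B : 𝔞.Obj X} {A : 𝔞.Obj Y}
    (x : 𝔞.Hom f B A) : 𝔞.Hom g B A :=
  _root_.cast (by rw [h]) x

theorem Hcast_heq {X Y : 𝒰} {f g : X ⟶ Y} (h : f = g) {B : 𝔞.Obj X} {A : 𝔞.Obj Y}
    (x : 𝔞.Hom f B A) : HEq (𝔞.Hcast h x) x :=
  cast_heq _ _

theorem Hcast_add {X Y : 𝒰} {f g : X ⟶ Y} (h : f = g) {B : 𝔞.Obj X} {A : 𝔞.Obj Y}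
    (x y : 𝔞.Hom f B A) : 𝔞.Hcast h (x + y) = 𝔞.Hcast h x + 𝔞.Hcast h y := by
  subst h; rfl

theorem Hcast_smul {X Y : 𝒰} {f g : X ⟶ Y} (h : f = g) {B : 𝔞.Obj X} {A : 𝔞.Obj Y}
    (r : k) (x : 𝔞.Hom f B A) : 𝔞.Hcast h (r • x) = r • 𝔞.Hcast h x := by
  subst h; rfl

theorem comp_congr {X Y Z : 𝒰} {f f' : Y ⟶ Z} (hf : f = f') {g g' : X ⟶ Y} (hg : g = g')
    {C : 𝔞.Obj X} {B : 𝔞.Obj Y} {A : 𝔞.Obj Z} {x : 𝔞.Hom f B A} {x' : 𝔞.Hom f' B A}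
    (hx : HEq x x') {y : 𝔞.Hom g C B} {y' : 𝔞.Hom g' C B} (hy : HEq y y') :
    HEq (𝔞.comp x y) (𝔞.comp x' y') := by
  subst hf; subst hg; rw [eq_of_heq hx, eq_of_heq hy]

end GradedCat

variable {𝒱 : Type u} [Category.{u} 𝒱]

/-- The `𝒱`-graded category `𝔞^φ` obtained by restricting a `𝒰`-graded category `𝔞`
along a functor `φ : 𝒱 ⥤ 𝒰`:  `(𝔞^φ)_V = 𝔞_{φ V}` and `(𝔞^φ)_v(A, A') = 𝔞_{φ v}(A, A')`. -/
def GradedCat.restrict (φ : 𝒱 ⥤ 𝒰) (𝔞 : GradedCat k 𝒰) : GradedCat k 𝒱 where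
  Obj V := 𝔞.Obj (φ.obj V)
  Hom f B A := 𝔞.Hom (φ.map f) B A
  comp x y := 𝔞.Hcast (φ.map_comp _ _).symm (𝔞.comp x y)
  id A := 𝔞.Hcast (φ.map_id _).symm (𝔞.id A)
  comp_add_left x x' y := by rw [𝔞.comp_add_left, 𝔞.Hcast_add]
  comp_add_right x y y' := by rw [𝔞.comp_add_right, 𝔞.Hcast_add]
  comp_smul_left r x y := by rw [𝔞.comp_smul_left, 𝔞.Hcast_smul]
  comp_smul_right r x y := by rw [𝔞.comp_smul_right, 𝔞.Hcast_smul]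
  comp_id x :=
    ((𝔞.Hcast_heq _ _).trans
      ((𝔞.comp_congr rfl (φ.map_id _) HEq.rfl (𝔞.Hcast_heq _ _)).trans (𝔞.comp_id _)))
  id_comp x :=
    ((𝔞.Hcast_heq _ _).trans
      ((𝔞.comp_congr (φ.map_id _) rfl (𝔞.Hcast_heq _ _) HEq.rfl).trans (𝔞.id_comp _)))
  assoc x y z := by
    refine ((𝔞.Hcast_heq _ _).trans ?_).trans (𝔞.Hcast_heq _ _).symm
    refine ((𝔞.comp_congr (φ.map_comp _ _) rfl (𝔞.Hcast_heq _ _) HEq.rfl).trans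
      (𝔞.assoc _ _ _)).trans ?_
    exact 𝔞.comp_congr rfl (φ.map_comp _ _).symm HEq.rfl (𝔞.Hcast_heq _ _).symm

variable (k)

/-- A graded functor `(φ, F) : (𝒱, 𝔟) → (𝒰, 𝔞)` over a functor `φ : 𝒱 ⥤ 𝒰`: maps
`F_V : 𝔟_V → 𝔞_{φ V}` on objects and `k`-linear maps `𝔟_v(B, B') → 𝔞_{φ v}(F B, F B')`
on graded morphisms, preserving composition and identities. -/
structure GradedFunctor (φ : 𝒱 ⥤ 𝒰) (𝔟 : GradedCat k 𝒱) (𝔞 : GradedCat k 𝒰) :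
    Type u where
  obj : ∀ {V : 𝒱}, 𝔟.Obj V → 𝔞.Obj (φ.obj V)
  map : ∀ {V V' : 𝒱} (f : V ⟶ V') {B : 𝔟.Obj V} {B' : 𝔟.Obj V'},
    𝔟.Hom f B B' → 𝔞.Hom (φ.map f) (obj B) (obj B')
  map_add : ∀ {V V' : 𝒱} (f : V ⟶ V') {B : 𝔟.Obj V} {B' : 𝔟.Obj V'}
    (x y : 𝔟.Hom f B B'), map f (x + y) = map f x + map f y
  map_smul : ∀ {V V' : 𝒱} (f : V ⟶ V') {B : 𝔟.Obj V} {B' : 𝔟.Obj V'} (r : k)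
    (x : 𝔟.Hom f B B'), map f (r • x) = r • map f x
  map_id : ∀ {V : 𝒱} (B : 𝔟.Obj V), HEq (map (𝟙 V) (𝔟.id B)) (𝔞.id (obj B))
  map_comp : ∀ {V V' V'' : 𝒱} {f : V' ⟶ V''} {g : V ⟶ V'} {C : 𝔟.Obj V} {B : 𝔟.Obj V'}
    {A : 𝔟.Obj V''} (x : 𝔟.Hom f B A) (y : 𝔟.Hom g C B),
    HEq (map (g ≫ f) (𝔟.comp x y)) (𝔞.comp (map f x) (map g y))

variable {k}

namespace GradedFunctor

variable {φ : 𝒱 ⥤ 𝒰} {𝔟 : GradedCat k 𝒱} {𝔞 : GradedCat k 𝒰}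

theorem map_congr (F : GradedFunctor k φ 𝔟 𝔞) {V V' : 𝒱} {f g : V ⟶ V'} (hfg : f = g)
    {B : 𝔟.Obj V} {B' : 𝔟.Obj V'} {x : 𝔟.Hom f B B'} {y : 𝔟.Hom g B B'} (h : HEq x y) :
    HEq (F.map f x) (F.map g y) := by
  subst hfg; rw [eq_of_heq h]

/-- A graded functor is subcartesian (cartesian with respect to `Map → Mas`) iff all its
maps between graded `Hom`-modules are bijective. -/
def Subcartesian (F : GradedFunctor k φ 𝔟 𝔞) : Prop :=
  ∀ {V V' : 𝒱} (f : V ⟶ V') (B : 𝔟.Obj V) (B' : 𝔟.Obj V'),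
    Function.Bijective (fun x : 𝔟.Hom f B B' => F.map f x)

variable {𝒲 : Type u} [Category.{u} 𝒲] {ψ : 𝒲 ⥤ 𝒱} {𝔠 : GradedCat k 𝒲}

/-- Composition of graded functors. -/
def comp (F : GradedFunctor k φ 𝔟 𝔞) (G : GradedFunctor k ψ 𝔠 𝔟) :
    GradedFunctor k (ψ ⋙ φ) 𝔠 𝔞 where
  obj C := F.obj (G.obj C)
  map := fun {V V'} f {B B'} x => F.map (ψ.map f) (G.map f x)
  map_add := by intro V V' f B B' x y; rw [G.map_add, F.map_add]
  map_smul := by intro V V' f B B' r x; rw [G.map_smul, F.map_smul]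
  map_id B := (F.map_congr (ψ.map_id _) (G.map_id _)).trans (F.map_id _)
  map_comp x y := (F.map_congr (ψ.map_comp _ _) (G.map_comp _ _)).trans (F.map_comp _ _)

end GradedFunctor

/-- The canonical cartesian graded functor `δ^{φ,𝔞} : (𝒱, 𝔞^φ) → (𝒰, 𝔞)`. -/
def restrictProj (φ : 𝒱 ⥤ 𝒰) (𝔞 : GradedCat k 𝒰) :
    GradedFunctor k φ (𝔞.restrict φ) 𝔞 where
  obj A := A
  map := fun {V V'} _f {B B'} x => x
  map_add := by intros; rfl
  map_smul := by intros; rfl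
  map_id B := 𝔞.Hcast_heq (φ.map_id _).symm (𝔞.id B)
  map_comp x y := 𝔞.Hcast_heq (φ.map_comp _ _).symm (𝔞.comp x y)

theorem restrictProj_subcartesian (φ : 𝒱 ⥤ 𝒰) (𝔞 : GradedCat k 𝒰) :
    (restrictProj φ 𝔞).Subcartesian := by
  intro V V' f B B'
  constructor
  · intro a b h
    exact h
  · intro y
    exact ⟨y, rfl⟩

end MapGr

namespace MapGr

variable {k : Type u} [CommRing k]
variable {𝒱 𝒰 : Type u} [Category.{u} 𝒱] [Category.{u} 𝒰]

/-- A graded functor `(φ, F) : (𝒱, 𝔟) → (𝒰, 𝔞)` is cartesian with respect to the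
projection `Ψ : Map → Cat` iff for every map-graded category `(𝒲, 𝔠)` and every functor
`ψ : 𝒲 ⥤ 𝒱`, composition with `(φ, F)` is a bijection from the graded functors
`(𝒲, 𝔠) → (𝒱, 𝔟)` over `ψ` to the graded functors `(𝒲, 𝔠) → (𝒰, 𝔞)` over `ψ ⋙ φ`. -/
def CartesianWrtCat {φ : 𝒱 ⥤ 𝒰} {𝔟 : GradedCat k 𝒱} {𝔞 : GradedCat k 𝒰}
    (F : GradedFunctor k φ 𝔟 𝔞) : Prop :=
  ∀ (𝒲 : Type u) [Category.{u} 𝒲] (𝔠 : GradedCat k 𝒲) (ψ : 𝒲 ⥤ 𝒱),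
    Function.Bijective (fun G : GradedFunctor k ψ 𝔠 𝔟 => F.comp G)

section Aux

/-- Transport of graded morphisms along equalities of the endpoint objects. -/
def GradedCat.Ocast (𝔞 : GradedCat k 𝒰) {X Y : 𝒰} {f : X ⟶ Y} {B C : 𝔞.Obj X}
    {B' C' : 𝔞.Obj Y} (hB : B = C) (hB' : B' = C') (x : 𝔞.Hom f B B') : 𝔞.Hom f C C' :=
  _root_.cast (by rw [hB, hB']) x

theorem GradedCat.Ocast_heq (𝔞 : GradedCat k 𝒰) {X Y : 𝒰} {f : X ⟶ Y} {B C : 𝔞.Obj X}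
    {B' C' : 𝔞.Obj Y} (hB : B = C) (hB' : B' = C') (x : 𝔞.Hom f B B') :
    HEq (𝔞.Ocast hB hB' x) x :=
  cast_heq _ _

theorem GradedCat.Ocast_add (𝔞 : GradedCat k 𝒰) {X Y : 𝒰} {f : X ⟶ Y} {B C : 𝔞.Obj X}
    {B' C' : 𝔞.Obj Y} (hB : B = C) (hB' : B' = C') (x y : 𝔞.Hom f B B') :
    𝔞.Ocast hB hB' (x + y) = 𝔞.Ocast hB hB' x + 𝔞.Ocast hB hB' y := by
  subst hB; subst hB'; rfl

theorem GradedCat.Ocast_smul (𝔞 : GradedCat k 𝒰) {X Y : 𝒰} {f : X ⟶ Y} {B C : 𝔞.Obj X}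
    {B' C' : 𝔞.Obj Y} (hB : B = C) (hB' : B' = C') (r : k) (x : 𝔞.Hom f B B') :
    𝔞.Ocast hB hB' (r • x) = r • 𝔞.Ocast hB hB' x := by
  subst hB; subst hB'; rfl

theorem GradedCat.id_ocongr (𝔞 : GradedCat k 𝒰) {X : 𝒰} {A A' : 𝔞.Obj X} (h : A = A') :
    HEq (𝔞.id A) (𝔞.id A') := by
  subst h; rfl

theorem GradedCat.comp_ocongr (𝔞 : GradedCat k 𝒰) {X Y Z : 𝒰} {f f' : Y ⟶ Z}
    (hf : f = f') {g g' : X ⟶ Y} (hg : g = g') {C C₁ : 𝔞.Obj X} {B B₁ : 𝔞.Obj Y}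
    {A A₁ : 𝔞.Obj Z} (hC : C = C₁) (hB : B = B₁) (hA : A = A₁)
    {x : 𝔞.Hom f B A} {x' : 𝔞.Hom f' B₁ A₁} (hx : HEq x x')
    {y : 𝔞.Hom g C B} {y' : 𝔞.Hom g' C₁ B₁} (hy : HEq y y') :
    HEq (𝔞.comp x y) (𝔞.comp x' y') := by
  subst hf; subst hg; subst hC; subst hB; subst hA
  rw [eq_of_heq hx, eq_of_heq hy]

variable {𝒲 𝒳 : Type u} [Category.{u} 𝒲] [Category.{u} 𝒳]

theorem GradedFunctor.obj_eq {ψ : 𝒲 ⥤ 𝒳} {𝔠 : GradedCat k 𝒲} {𝔡 : GradedCat k 𝒳}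
    {G G' : GradedFunctor k ψ 𝔠 𝔡} (h : G = G') {W : 𝒲} (C : 𝔠.Obj W) :
    G.obj C = G'.obj C := by
  subst h; rfl

theorem GradedFunctor.map_heq {ψ : 𝒲 ⥤ 𝒳} {𝔠 : GradedCat k 𝒲} {𝔡 : GradedCat k 𝒳}
    {G G' : GradedFunctor k ψ 𝔠 𝔡} (h : G = G') {W W' : 𝒲} (f : W ⟶ W')
    {C : 𝔠.Obj W} {C' : 𝔠.Obj W'} (x : 𝔠.Hom f C C') :
    HEq (G.map f x) (G'.map f x) := by
  subst h; rfl

/-- Extensionality for graded functors. -/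
theorem GradedFunctor.ext' {ψ : 𝒲 ⥤ 𝒳} {𝔠 : GradedCat k 𝒲} {𝔡 : GradedCat k 𝒳}
    {G G' : GradedFunctor k ψ 𝔠 𝔡}
    (hobj : ∀ (W : 𝒲) (C : 𝔠.Obj W), G.obj C = G'.obj C)
    (hmap : ∀ (W W' : 𝒲) (f : W ⟶ W') (C : 𝔠.Obj W) (C' : 𝔠.Obj W') (x : 𝔠.Hom f C C'),
      HEq (G.map f x) (G'.map f x)) : G = G' := by
  obtain ⟨o, m, _, _, _, _⟩ := G
  obtain ⟨o', m', _, _, _, _⟩ := G'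
  have ho : @o = @o' := by
    funext W C
    exact hobj W C
  subst ho
  have hm : @m = @m' := by
    funext W W' f C C' x
    exact eq_of_heq (hmap W W' f C C' x)
  subst hm
  rfl

variable {φ : 𝒱 ⥤ 𝒰} {𝔟 : GradedCat k 𝒱} {𝔞 : GradedCat k 𝒰}

theorem GradedFunctor.map_ocongr (F : GradedFunctor k φ 𝔟 𝔞) {V V' : 𝒱} (f : V ⟶ V')
    {B C : 𝔟.Obj V} {B' C' : 𝔟.Obj V'} (hB : B = C) (hB' : B' = C')
    {x : 𝔟.Hom f B B'} {y : 𝔟.Hom f C C'} (h : HEq x y) :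
    HEq (F.map f x) (F.map f y) := by
  subst hB; subst hB'; rw [eq_of_heq h]

/-- The identity graded functor. -/
def idFunctor (𝔟 : GradedCat k 𝒱) : GradedFunctor k (𝟭 𝒱) 𝔟 𝔟 where
  obj B := B
  map := fun {V V'} _f {B B'} x => x
  map_add := by intros; rfl
  map_smul := by intros; rfl
  map_id _ := HEq.rfl
  map_comp _ _ := HEq.rfl

/-- The canonical graded functor `𝔟 → 𝔞^φ` over `𝟭 𝒱` induced by `F : 𝔟 → 𝔞` over `φ`. -/
def toRestrict (F : GradedFunctor k φ 𝔟 𝔞) : GradedFunctor k (𝟭 𝒱) 𝔟 (𝔞.restrict φ) where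
  obj B := F.obj B
  map := fun {V V'} f {B B'} x => F.map f x
  map_add := fun {V V'} f {B B'} x y => F.map_add f x y
  map_smul := fun {V V'} f {B B'} r x => F.map_smul f r x
  map_id := fun {V} B => by
    refine (F.map_id B).trans ?_
    exact (𝔞.Hcast_heq (φ.map_id V).symm (𝔞.id (F.obj B))).symm
  map_comp := fun {V V' V''} {f} {g} {C B A} x y => by
    refine (F.map_comp x y).trans ?_
    exact (𝔞.Hcast_heq (φ.map_comp g f).symm (𝔞.comp (F.map f x) (F.map g y))).symm

variable {𝔠 : GradedCat k 𝒲} {ψ : 𝒲 ⥤ 𝒱}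

/-- Object part of the lift of `H` through `F`. -/
noncomputable def liftObj (F : GradedFunctor k φ 𝔟 𝔞)
    (hobj : ∀ V : 𝒱, Function.Bijective (fun B : 𝔟.Obj V => F.obj B))
    (H : GradedFunctor k (ψ ⋙ φ) 𝔠 𝔞) {W : 𝒲} (C : 𝔠.Obj W) : 𝔟.Obj (ψ.obj W) :=
  (Equiv.ofBijective _ (hobj (ψ.obj W))).symm (H.obj C)

theorem liftObj_spec (F : GradedFunctor k φ 𝔟 𝔞)
    (hobj : ∀ V : 𝒱, Function.Bijective (fun B : 𝔟.Obj V => F.obj B))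
    (H : GradedFunctor k (ψ ⋙ φ) 𝔠 𝔞) {W : 𝒲} (C : 𝔠.Obj W) :
    F.obj (liftObj F hobj H C) = H.obj C :=
  (Equiv.ofBijective _ (hobj (ψ.obj W))).apply_symm_apply (H.obj C)

/-- Morphism part of the lift of `H` through `F`. -/
noncomputable def liftMap (F : GradedFunctor k φ 𝔟 𝔞)
    (hobj : ∀ V : 𝒱, Function.Bijective (fun B : 𝔟.Obj V => F.obj B))
    (hmap : F.Subcartesian) (H : GradedFunctor k (ψ ⋙ φ) 𝔠 𝔞)
    {W W' : 𝒲} (f : W ⟶ W') {C : 𝔠.Obj W} {C' : 𝔠.Obj W'} (x : 𝔠.Hom f C C') :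
    𝔟.Hom (ψ.map f) (liftObj F hobj H C) (liftObj F hobj H C') :=
  (Equiv.ofBijective _ (hmap (ψ.map f) (liftObj F hobj H C) (liftObj F hobj H C'))).symm
    (𝔞.Ocast (liftObj_spec F hobj H C).symm (liftObj_spec F hobj H C').symm (H.map f x))

theorem liftMap_spec (F : GradedFunctor k φ 𝔟 𝔞)
    (hobj : ∀ V : 𝒱, Function.Bijective (fun B : 𝔟.Obj V => F.obj B))
    (hmap : F.Subcartesian) (H : GradedFunctor k (ψ ⋙ φ) 𝔠 𝔞)
    {W W' : 𝒲} (f : W ⟶ W') {C : 𝔠.Obj W} {C' : 𝔠.Obj W'} (x : 𝔠.Hom f C C') :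
    F.map (ψ.map f) (liftMap F hobj hmap H f x) =
      𝔞.Ocast (liftObj_spec F hobj H C).symm (liftObj_spec F hobj H C').symm (H.map f x) :=
  (Equiv.ofBijective _
    (hmap (ψ.map f) (liftObj F hobj H C) (liftObj F hobj H C'))).apply_symm_apply _

theorem liftMap_heq (F : GradedFunctor k φ 𝔟 𝔞)
    (hobj : ∀ V : 𝒱, Function.Bijective (fun B : 𝔟.Obj V => F.obj B))
    (hmap : F.Subcartesian) (H : GradedFunctor k (ψ ⋙ φ) 𝔠 𝔞)
    {W W' : 𝒲} (f : W ⟶ W') {C : 𝔠.Obj W} {C' : 𝔠.Obj W'} (x : 𝔠.Hom f C C') :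
    HEq (F.map (ψ.map f) (liftMap F hobj hmap H f x)) (H.map f x) :=
  (heq_of_eq (liftMap_spec F hobj hmap H f x)).trans (𝔞.Ocast_heq _ _ _)

/-- The lift of `H` through `F`. -/
noncomputable def lift (F : GradedFunctor k φ 𝔟 𝔞)
    (hobj : ∀ V : 𝒱, Function.Bijective (fun B : 𝔟.Obj V => F.obj B))
    (hmap : F.Subcartesian) (H : GradedFunctor k (ψ ⋙ φ) 𝔠 𝔞) :
    GradedFunctor k ψ 𝔠 𝔟 where
  obj C := liftObj F hobj H C
  map := fun {W W'} f {C C'} x => liftMap F hobj hmap H f x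
  map_add := fun {W W'} f {C C'} x y => by
    apply (hmap (ψ.map f) _ _).1
    show F.map _ _ = F.map _ _
    simp only [F.map_add, liftMap_spec, H.map_add]
    exact 𝔞.Ocast_add _ _ _ _
  map_smul := fun {W W'} f {C C'} r x => by
    apply (hmap (ψ.map f) _ _).1
    show F.map _ _ = F.map _ _
    simp only [F.map_smul, liftMap_spec, H.map_smul]
    exact 𝔞.Ocast_smul _ _ _ _
  map_id := fun {W} C => by
    have h : liftMap F hobj hmap H (𝟙 _) (𝔠.id C)
        = 𝔟.Hcast (ψ.map_id _).symm (𝔟.id (liftObj F hobj H C)) := by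
      apply (hmap (ψ.map (𝟙 _)) _ _).1
      show F.map _ _ = F.map _ _
      rw [liftMap_spec]
      refine eq_of_heq (HEq.symm ?_)
      refine ((F.map_congr (ψ.map_id _) (𝔟.Hcast_heq _ _)).trans (F.map_id _)).trans ?_
      exact ((𝔞.id_ocongr (liftObj_spec F hobj H C)).trans (H.map_id C).symm).trans
        (𝔞.Ocast_heq _ _ _).symm
    exact (heq_of_eq h).trans (𝔟.Hcast_heq _ _)
  map_comp := fun {W W' W''} {f} {g} {C} {B} {A} x y => by
    have h : liftMap F hobj hmap H (g ≫ f) (𝔠.comp x y)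
        = 𝔟.Hcast (ψ.map_comp g f).symm
            (𝔟.comp (liftMap F hobj hmap H f x) (liftMap F hobj hmap H g y)) := by
      apply (hmap (ψ.map (g ≫ f)) _ _).1
      show F.map _ _ = F.map _ _
      rw [liftMap_spec]
      refine eq_of_heq (HEq.symm ?_)
      refine ((F.map_congr (ψ.map_comp g f) (𝔟.Hcast_heq _ _)).trans
        (F.map_comp _ _)).trans ?_
      refine HEq.trans ?_ ((H.map_comp x y).symm.trans (𝔞.Ocast_heq _ _ _).symm)
      exact 𝔞.comp_ocongr rfl rfl (liftObj_spec F hobj H C) (liftObj_spec F hobj H B)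
        (liftObj_spec F hobj H A) (liftMap_heq F hobj hmap H f x)
        (liftMap_heq F hobj hmap H g y)
    exact (heq_of_eq h).trans (𝔟.Hcast_heq _ _)

end Aux

/-- A graded functor `(φ, F) : (𝒱, 𝔟) → (𝒰, 𝔞)` is cartesian with respect to the
projection `Ψ : Map → Cat` if and only if (1) every map `F_V : 𝔟_V → 𝔞_{φ V}` on objects
is a bijection and (2) every map `𝔟_v(B, B') → 𝔞_{φ v}(F B, F B')` on graded morphisms is
an isomorphism of `k`-modules. -/
theorem statement6 {φ : 𝒱 ⥤ 𝒰} {𝔟 : GradedCat k 𝒱} {𝔞 : GradedCat k 𝒰}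
    (F : GradedFunctor k φ 𝔟 𝔞) :
    CartesianWrtCat F ↔
      ((∀ V : 𝒱, Function.Bijective (fun B : 𝔟.Obj V => F.obj B)) ∧
        F.Subcartesian) := by
  constructor
  · intro hF
    obtain ⟨G, hG⟩ := (hF 𝒱 (𝔞.restrict φ) (𝟭 𝒱)).2
      (show GradedFunctor k (𝟭 𝒱 ⋙ φ) (𝔞.restrict φ) 𝔞 from restrictProj φ 𝔞)
    have h3 : ∀ {V : 𝒱} (A : 𝔞.Obj (φ.obj V)), F.obj (G.obj A) = A :=
      fun A => GradedFunctor.obj_eq hG A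
    have h4 : ∀ {V V' : 𝒱} (f : V ⟶ V') (A : 𝔞.Obj (φ.obj V)) (A' : 𝔞.Obj (φ.obj V'))
        (y : 𝔞.Hom (φ.map f) A A'), HEq (F.map f (G.map f y)) y :=
      fun f A A' y => GradedFunctor.map_heq hG f y
    have hK : (G.comp (toRestrict F) : GradedFunctor k (𝟭 𝒱) 𝔟 𝔟) = idFunctor 𝔟 := by
      apply (hF 𝒱 𝔟 (𝟭 𝒱)).1
      apply GradedFunctor.ext'
      · intro V B
        exact h3 (F.obj B)
      · intro V V' f B B' x
        exact h4 f _ _ (F.map f x)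
    have h1 : ∀ {V : 𝒱} (B : 𝔟.Obj V), G.obj (F.obj B) = B :=
      fun B => GradedFunctor.obj_eq hK B
    have h2 : ∀ {V V' : 𝒱} (f : V ⟶ V') {B : 𝔟.Obj V} {B' : 𝔟.Obj V'} (x : 𝔟.Hom f B B'),
        HEq (G.map f (F.map f x)) x := by
      intro V V' f B B' x
      exact GradedFunctor.map_heq hK f x
    constructor
    · intro V
      constructor
      · intro B B' h
        exact (h1 B).symm.trans
          ((congrArg (fun A : 𝔞.Obj (φ.obj V) => G.obj A) h).trans (h1 B'))
      · intro A
        exact ⟨G.obj A, h3 A⟩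
    · intro V V' f B B'
      constructor
      · intro x x' hxx
        have heq2 : G.map f (F.map f x) = G.map f (F.map f x') :=
          congrArg (fun y => G.map f y) hxx
        exact eq_of_heq (((h2 f x).symm.trans (heq_of_eq heq2)).trans (h2 f x'))
      · intro y
        refine ⟨𝔟.Ocast (h1 B) (h1 B') (G.map f y), ?_⟩
        exact eq_of_heq
          ((F.map_ocongr f (h1 B) (h1 B') ((𝔟.Ocast_heq _ _ _).symm)).symm.trans
            (h4 f _ _ y))
  · rintro ⟨hobj, hmap⟩
    intro 𝒲 _ 𝔠 ψ
    constructor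
    · intro G G' h
      have hO : ∀ {W : 𝒲} (C : 𝔠.Obj W), G.obj C = G'.obj C :=
        fun C => (hobj _).1 (GradedFunctor.obj_eq h C)
      apply GradedFunctor.ext' (fun W C => hO C)
      intro W W' f C C' x
      have key : F.map (ψ.map f) (𝔟.Ocast (hO C) (hO C') (G.map f x))
          = F.map (ψ.map f) (G'.map f x) :=
        eq_of_heq
          ((F.map_ocongr (ψ.map f) (hO C).symm (hO C').symm (𝔟.Ocast_heq _ _ _)).trans
            (GradedFunctor.map_heq h f x))
      have key2 := (hmap (ψ.map f) (G'.obj C) (G'.obj C')).1 key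
      exact (𝔟.Ocast_heq (hO C) (hO C') (G.map f x)).symm.trans (heq_of_eq key2)
    · intro H
      refine ⟨lift F hobj hmap H, ?_⟩
      apply GradedFunctor.ext'
      · intro W C
        exact liftObj_spec F hobj H C
      · intro W W' f C C' x
        exact liftMap_heq F hobj hmap H f x

end MapGr
end

section
/- Let (𝒵, 𝒱) be an ideal-subcategory decomposition of a small category 𝒰, let 𝔞 be a 𝒰-graded category, let 𝔟 = 𝔞^φ for the inclusion φ : 𝒱 ⊆ 𝒰, and let M be an 𝔞-bimodule. Let M_𝒵 ⊆ M be the sub-bimodule with (M_𝒵)_u(B,A) = M_u(B,A) for u ∈ 𝒵 and 0 otherwise (a sub-bimodule because 𝒵 is an ideal), and let M_𝒱 = M/M_𝒵, so that (M_𝒱)_u(B,A) = M_u(B,A) for u ∈ 𝒱 and 0 otherwise. Then the restriction φ* : C_𝒰(𝔞, M) → C_𝒱(𝔟, M^φ) is surjective, and the short exact sequence of complexes 0 → C_𝒰(𝔞, M_𝒵) → C_𝒰(𝔞, M) → C_𝒰(𝔞, M_𝒱) → 0 induced by 0 → M_𝒵 → M → M_𝒱 → 0 is canonically isomorphic to the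 sequence 0 → ker(φ*) → C_𝒰(𝔞, M) → C_𝒱(𝔟, M^φ) → 0. In particular C_𝒰(𝔞, M_𝒵) ≅ C_{𝒰∖𝒱}(𝔞, M) := ker(φ*) and C_𝒰(𝔞, M_𝒱) ≅ C_𝒱(𝔟, M^φ). -/
open CategoryTheory

universe u

namespace MapGr

variable {k : Type u} [CommRing k]
variable {𝒰 : Type u} [Category.{u} 𝒰]

/-- The category `𝒰^♯` associated to a `𝒰`-graded category `𝔞`: objects are pairs
`(U, A)` with `A ∈ 𝔞_U`, and morphisms `(U, A) → (U', A')` are the morphisms `U ⟶ U'`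
of `𝒰`. -/
def Sh (𝔞 : GradedCat k 𝒰) : Type u := Σ X : 𝒰, 𝔞.Obj X

instance (𝔞 : GradedCat k 𝒰) : Category.{u} (Sh 𝔞) where
  Hom A B := A.1 ⟶ B.1
  id A := 𝟙 A.1
  comp f g := f ≫ g
  id_comp := by intros; simp
  comp_id := by intros; simp
  assoc := by intros; simp

/-- The underlying morphism of `𝒰` of a morphism of `𝒰^♯`. -/
def Sh.base {𝔞 : GradedCat k 𝒰} {A B : Sh 𝔞} (f : A ⟶ B) : A.1 ⟶ B.1 := f

@[simp] theorem Sh.base_id {𝔞 : GradedCat k 𝒰} (A : Sh 𝔞) :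
    Sh.base (𝟙 A) = 𝟙 A.1 := rfl

@[simp] theorem Sh.base_comp {𝔞 : GradedCat k 𝒰} {A B C : Sh 𝔞} (f : A ⟶ B) (g : B ⟶ C) :
    Sh.base (f ≫ g) = Sh.base f ≫ Sh.base g := rfl

/-- `n`-simplices of the simplicial nerve of a category with specified endpoints:
strings `X = X₀ → X₁ → ⋯ → Xₙ = Y` of `n` composable morphisms. -/
inductive Pth (C : Type u) [Category.{u} C] : ℕ → C → C → Type u
  | nil (X : C) : Pth C 0 X X
  | cons {n : ℕ} {X Y Z : C} (f : X ⟶ Y) (p : Pth C n Y Z) : Pth C (n + 1) X Z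

/-- The composite `|u| = uₙ₋₁ ⋯ u₁ u₀` of a string of composable morphisms. -/
def Pth.comp {C : Type u} [Category.{u} C] : ∀ {n : ℕ} {X Y : C}, Pth C n X Y → (X ⟶ Y)
  | _, _, _, .nil X => 𝟙 X
  | _, _, _, .cons f p => f ≫ p.comp

@[simp] theorem Pth.comp_nil {C : Type u} [Category.{u} C] (X : C) :
    (Pth.nil X).comp = 𝟙 X := rfl

@[simp] theorem Pth.comp_cons {C : Type u} [Category.{u} C] {n : ℕ} {X Y Z : C}
    (f : X ⟶ Y) (p : Pth C n Y Z) : (Pth.cons f p).comp = f ≫ p.comp := rfl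

/-- The map induced by a functor on simplices of the nerves. -/
def Pth.map {C D : Type u} [Category.{u} C] [Category.{u} D] (F : C ⥤ D) :
    ∀ {n : ℕ} {X Y : C}, Pth C n X Y → Pth D n (F.obj X) (F.obj Y)
  | _, _, _, .nil X => .nil _
  | _, _, _, .cons f p => .cons (F.map f) (p.map F)

theorem Pth.comp_map {C D : Type u} [Category.{u} C] [Category.{u} D] (F : C ⥤ D)
    {n : ℕ} {X Y : C} (p : Pth C n X Y) : (p.map F).comp = F.map p.comp := by
  induction p with
  | nil => simp [Pth.map]
  | cons f p ih => simp [Pth.map, ih]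

/-- The set of `n`-simplices of the nerve `𝒩(𝔞) = 𝒩(𝒰^♯)` of a graded category. -/
def NerveTot (C : Type u) [Category.{u} C] (m : ℕ) : Type u :=
  Σ (X : C) (Y : C), Pth C m X Y

/-- The map induced by a functor on the set of `n`-simplices of the nerves. -/
def NerveTot.map {C D : Type u} [Category.{u} C] [Category.{u} D] (F : C ⥤ D) {m : ℕ}
    (s : NerveTot C m) : NerveTot D m :=
  ⟨F.obj s.1, F.obj s.2.1, Pth.map F s.2.2⟩

/-- A family of elements of the graded `Hom`-modules of `𝔞` lying over a simplex of the
nerve of `𝔞`. -/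
inductive PthElts {k : Type u} [CommRing k] {𝒰 : Type u} [Category.{u} 𝒰]
    (𝔞 : GradedCat k 𝒰) : ∀ {n : ℕ} {X Y : Sh 𝔞}, Pth (Sh 𝔞) n X Y → Type u
  | nil (X : Sh 𝔞) : PthElts 𝔞 (Pth.nil X)
  | cons {n : ℕ} {X Y Z : Sh 𝔞} {f : X ⟶ Y} {p : Pth (Sh 𝔞) n Y Z}
      (x : 𝔞.Hom (Sh.base f) X.2 Y.2) (e : PthElts 𝔞 p) : PthElts 𝔞 (Pth.cons f p)

variable (k)

/-- An `𝔞`-bimodule `M`: `k`-modules `M_u(B, A)` together with associative, unital,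
`k`-bilinear left and right actions of `𝔞`. -/
structure Bimod {𝒰 : Type u} [Category.{u} 𝒰] (𝔞 : GradedCat k 𝒰) : Type (u + 1) where
  M : ∀ {X Y : 𝒰}, (X ⟶ Y) → 𝔞.Obj X → 𝔞.Obj Y → ModuleCat.{u} k
  actL : ∀ {X Y Z : 𝒰} {f : Y ⟶ Z} {g : X ⟶ Y} {B : 𝔞.Obj X} {A : 𝔞.Obj Y}
    {A' : 𝔞.Obj Z}, 𝔞.Hom f A A' → M g B A → M (g ≫ f) B A'
  actR : ∀ {X Y Z : 𝒰} {f : Y ⟶ Z} {g : X ⟶ Y} {B' : 𝔞.Obj X} {B : 𝔞.Obj Y}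
    {A : 𝔞.Obj Z}, M f B A → 𝔞.Hom g B' B → M (g ≫ f) B' A
  actL_add_left : ∀ {X Y Z : 𝒰} {f : Y ⟶ Z} {g : X ⟶ Y} {B : 𝔞.Obj X} {A : 𝔞.Obj Y}
    {A' : 𝔞.Obj Z} (x x' : 𝔞.Hom f A A') (m : M g B A),
    actL (x + x') m = actL x m + actL x' m
  actL_add_right : ∀ {X Y Z : 𝒰} {f : Y ⟶ Z} {g : X ⟶ Y} {B : 𝔞.Obj X} {A : 𝔞.Obj Y}
    {A' : 𝔞.Obj Z} (x : 𝔞.Hom f A A') (m m' : M g B A),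
    actL x (m + m') = actL x m + actL x m'
  actL_smul_left : ∀ {X Y Z : 𝒰} {f : Y ⟶ Z} {g : X ⟶ Y} {B : 𝔞.Obj X} {A : 𝔞.Obj Y}
    {A' : 𝔞.Obj Z} (r : k) (x : 𝔞.Hom f A A') (m : M g B A),
    actL (r • x) m = r • actL x m
  actL_smul_right : ∀ {X Y Z : 𝒰} {f : Y ⟶ Z} {g : X ⟶ Y} {B : 𝔞.Obj X} {A : 𝔞.Obj Y}
    {A' : 𝔞.Obj Z} (r : k) (x : 𝔞.Hom f A A') (m : M g B A),
    actL x (r • m) = r • actL x m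
  actR_add_left : ∀ {X Y Z : 𝒰} {f : Y ⟶ Z} {g : X ⟶ Y} {B' : 𝔞.Obj X} {B : 𝔞.Obj Y}
    {A : 𝔞.Obj Z} (m m' : M f B A) (y : 𝔞.Hom g B' B),
    actR (m + m') y = actR m y + actR m' y
  actR_add_right : ∀ {X Y Z : 𝒰} {f : Y ⟶ Z} {g : X ⟶ Y} {B' : 𝔞.Obj X} {B : 𝔞.Obj Y}
    {A : 𝔞.Obj Z} (m : M f B A) (y y' : 𝔞.Hom g B' B),
    actR m (y + y') = actR m y + actR m y'
  actR_smul_left : ∀ {X Y Z : 𝒰} {f : Y ⟶ Z} {g : X ⟶ Y} {B' : 𝔞.Obj X} {B : 𝔞.Obj Y}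
    {A : 𝔞.Obj Z} (r : k) (m : M f B A) (y : 𝔞.Hom g B' B),
    actR (r • m) y = r • actR m y
  actR_smul_right : ∀ {X Y Z : 𝒰} {f : Y ⟶ Z} {g : X ⟶ Y} {B' : 𝔞.Obj X} {B : 𝔞.Obj Y}
    {A : 𝔞.Obj Z} (r : k) (m : M f B A) (y : 𝔞.Hom g B' B),
    actR m (r • y) = r • actR m y
  actL_id : ∀ {X Y : 𝒰} {g : X ⟶ Y} {B : 𝔞.Obj X} {A : 𝔞.Obj Y} (m : M g B A),
    HEq (actL (𝔞.id A) m) m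
  actR_id : ∀ {X Y : 𝒰} {f : X ⟶ Y} {B : 𝔞.Obj X} {A : 𝔞.Obj Y} (m : M f B A),
    HEq (actR m (𝔞.id B)) m
  actL_actL : ∀ {W X Y Z : 𝒰} {f' : Y ⟶ Z} {f : X ⟶ Y} {g : W ⟶ X} {B : 𝔞.Obj W}
    {A : 𝔞.Obj X} {A' : 𝔞.Obj Y} {A'' : 𝔞.Obj Z} (x : 𝔞.Hom f' A' A'')
    (y : 𝔞.Hom f A A') (m : M g B A),
    HEq (actL x (actL y m)) (actL (𝔞.comp x y) m)
  actR_actR : ∀ {W X Y Z : 𝒰} {f : Y ⟶ Z} {g : X ⟶ Y} {h : W ⟶ X} {B'' : 𝔞.Obj W}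
    {B' : 𝔞.Obj X} {B : 𝔞.Obj Y} {A : 𝔞.Obj Z} (m : M f B A) (y : 𝔞.Hom g B' B)
    (y' : 𝔞.Hom h B'' B'),
    HEq (actR (actR m y) y') (actR m (𝔞.comp y y'))
  actL_actR : ∀ {W X Y Z : 𝒰} {f : Y ⟶ Z} {g : X ⟶ Y} {h : W ⟶ X} {B' : 𝔞.Obj W}
    {B : 𝔞.Obj X} {A : 𝔞.Obj Y} {A' : 𝔞.Obj Z} (x : 𝔞.Hom f A A') (m : M g B A)
    (y : 𝔞.Hom h B' B),
    HEq (actL x (actR m y)) (actR (actL x m) y)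

variable {k}

namespace Bimod

variable {𝔞 : GradedCat k 𝒰} (M : Bimod k 𝔞)

/-- Transport of bimodule elements along an equality of underlying morphisms of `𝒰`. -/
def cst {X Y : 𝒰} {f g : X ⟶ Y} (h : f = g) {B : 𝔞.Obj X} {A : 𝔞.Obj Y}
    (m : M.M f B A) : M.M g B A :=
  _root_.cast (by rw [h]) m

theorem cst_heq {X Y : 𝒰} {f g : X ⟶ Y} (h : f = g) {B : 𝔞.Obj X} {A : 𝔞.Obj Y}
    (m : M.M f B A) : HEq (M.cst h m) m :=
  cast_heq _ _

theorem cst_add {X Y : 𝒰} {f g : X ⟶ Y} (h : f = g) {B : 𝔞.Obj X} {A : 𝔞.Obj Y}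
    (m m' : M.M f B A) : M.cst h (m + m') = M.cst h m + M.cst h m' := by
  subst h; rfl

theorem cst_smul {X Y : 𝒰} {f g : X ⟶ Y} (h : f = g) {B : 𝔞.Obj X} {A : 𝔞.Obj Y}
    (r : k) (m : M.M f B A) : M.cst h (r • m) = r • M.cst h m := by
  subst h; rfl

theorem actL_congr {X Y Z : 𝒰} {f f' : Y ⟶ Z} (hf : f = f') {g g' : X ⟶ Y}
    (hg : g = g') {B : 𝔞.Obj X} {A : 𝔞.Obj Y} {A' : 𝔞.Obj Z} {x : 𝔞.Hom f A A'}
    {x' : 𝔞.Hom f' A A'} (hx : HEq x x') {m : M.M g B A} {m' : M.M g' B A}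
    (hm : HEq m m') : HEq (M.actL x m) (M.actL x' m') := by
  subst hf; subst hg; rw [eq_of_heq hx, eq_of_heq hm]

theorem actR_congr {X Y Z : 𝒰} {f f' : Y ⟶ Z} (hf : f = f') {g g' : X ⟶ Y}
    (hg : g = g') {B' : 𝔞.Obj X} {B : 𝔞.Obj Y} {A : 𝔞.Obj Z} {m : M.M f B A}
    {m' : M.M f' B A} (hm : HEq m m') {y : 𝔞.Hom g B' B} {y' : 𝔞.Hom g' B' B}
    (hy : HEq y y') : HEq (M.actR m y) (M.actR m' y') := by
  subst hf; subst hg; rw [eq_of_heq hm, eq_of_heq hy]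

end Bimod

/-- The identity bimodule `1_𝔞`. -/
def GradedCat.unit (𝔞 : GradedCat k 𝒰) : Bimod k 𝔞 where
  M := 𝔞.Hom
  actL := 𝔞.comp
  actR := 𝔞.comp
  actL_add_left := 𝔞.comp_add_left
  actL_add_right := 𝔞.comp_add_right
  actL_smul_left := 𝔞.comp_smul_left
  actL_smul_right := 𝔞.comp_smul_right
  actR_add_left := 𝔞.comp_add_left
  actR_add_right := 𝔞.comp_add_right
  actR_smul_left := 𝔞.comp_smul_left
  actR_smul_right := 𝔞.comp_smul_right
  actL_id := 𝔞.id_comp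
  actR_id := 𝔞.comp_id
  actL_actL x y m := (𝔞.assoc x y m).symm
  actR_actR m y y' := 𝔞.assoc m y y'
  actL_actR x m y := (𝔞.assoc x m y).symm

variable {𝒱 : Type u} [Category.{u} 𝒱]

/-- The pullback `F*M` of an `𝔞`-bimodule along a graded functor
`(φ, F) : (𝒱, 𝔟) → (𝒰, 𝔞)`: `(F*M)_v(B, B') = M_{φ v}(F B, F B')`. -/
def Bimod.pullback {φ : 𝒱 ⥤ 𝒰} {𝔟 : GradedCat k 𝒱} {𝔞 : GradedCat k 𝒰}
    (F : GradedFunctor k φ 𝔟 𝔞) (M : Bimod k 𝔞) : Bimod k 𝔟 where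
  M f B B' := M.M (φ.map f) (F.obj B) (F.obj B')
  actL := fun {X Y Z f g B A A'} x m =>
    M.cst (φ.map_comp g f).symm (M.actL (F.map f x) m)
  actR := fun {X Y Z f g B' B A} m y =>
    M.cst (φ.map_comp g f).symm (M.actR m (F.map g y))
  actL_add_left := by
    intros; rw [F.map_add, M.actL_add_left, M.cst_add]
  actL_add_right := by
    intros; rw [M.actL_add_right, M.cst_add]
  actL_smul_left := by
    intros; rw [F.map_smul, M.actL_smul_left, M.cst_smul]
  actL_smul_right := by
    intros; rw [M.actL_smul_right, M.cst_smul]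
  actR_add_left := by
    intros; rw [M.actR_add_left, M.cst_add]
  actR_add_right := by
    intros; rw [F.map_add, M.actR_add_right, M.cst_add]
  actR_smul_left := by
    intros; rw [M.actR_smul_left, M.cst_smul]
  actR_smul_right := by
    intros; rw [F.map_smul, M.actR_smul_right, M.cst_smul]
  actL_id := by
    intro X Y g B A m
    exact (M.cst_heq _ _).trans
      ((M.actL_congr (φ.map_id _) rfl (F.map_id _) HEq.rfl).trans (M.actL_id m))
  actR_id := by
    intro X Y f B A m
    exact (M.cst_heq _ _).trans
      ((M.actR_congr rfl (φ.map_id _) HEq.rfl (F.map_id _)).trans (M.actR_id m))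
  actL_actL := by
    intro W X Y Z f' f g B A A' A'' x y m
    refine ((M.cst_heq _ _).trans ?_).trans (M.cst_heq _ _).symm
    refine ((M.actL_congr rfl (φ.map_comp _ _) HEq.rfl (M.cst_heq _ _)).trans
      (M.actL_actL _ _ _)).trans ?_
    exact M.actL_congr (φ.map_comp _ _).symm rfl (F.map_comp _ _).symm HEq.rfl
  actR_actR := by
    intro W X Y Z f g h B'' B' B A m y y'
    refine ((M.cst_heq _ _).trans ?_).trans (M.cst_heq _ _).symm
    refine ((M.actR_congr (φ.map_comp _ _) rfl (M.cst_heq _ _) HEq.rfl).trans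
      (M.actR_actR _ _ _)).trans ?_
    exact M.actR_congr rfl (φ.map_comp _ _).symm HEq.rfl (F.map_comp _ _).symm
  actL_actR := by
    intro W X Y Z f g h B' B A A' x m y
    refine ((M.cst_heq _ _).trans ?_).trans (M.cst_heq _ _).symm
    refine ((M.actL_congr rfl (φ.map_comp _ _) HEq.rfl (M.cst_heq _ _)).trans
      (M.actL_actR _ _ _)).trans ?_
    exact M.actR_congr (φ.map_comp _ _).symm rfl (M.cst_heq _ _).symm HEq.rfl

/-- The functor `𝒱^♯ ⥤ 𝒰^♯` induced by a graded functor. -/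
def sharpF {φ : 𝒱 ⥤ 𝒰} {𝔟 : GradedCat k 𝒱} {𝔞 : GradedCat k 𝒰}
    (F : GradedFunctor k φ 𝔟 𝔞) : Sh 𝔟 ⥤ Sh 𝔞 where
  obj X := ⟨φ.obj X.1, F.obj X.2⟩
  map {X Y} f := φ.map (Sh.base f)
  map_id X := φ.map_id X.1
  map_comp f g := φ.map_comp _ _

/-- The map induced by a graded functor on families of elements over simplices. -/
def eltsMap {φ : 𝒱 ⥤ 𝒰} {𝔟 : GradedCat k 𝒱} {𝔞 : GradedCat k 𝒰}
    (F : GradedFunctor k φ 𝔟 𝔞) :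
    ∀ {n : ℕ} {X Y : Sh 𝔟} {p : Pth (Sh 𝔟) n X Y},
      PthElts 𝔟 p → PthElts 𝔞 (p.map (sharpF F))
  | _, _, _, _, .nil X => .nil _
  | _, _, _, _, .cons x e => .cons (F.map _ x) (eltsMap F e)

/-- The module of raw Hochschild `n`-cochains of `(𝒰, 𝔞)` with values in an
`𝔞`-bimodule `M`: families, indexed by the `n`-simplices `(u, A)` of `𝒩(𝔞)`, of maps
`𝔞_{u_{n-1}} ⊗ ⋯ ⊗ 𝔞_{u_0} → M_{|u|}(A₀, Aₙ)` (multilinearity is the separate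
predicate `IsCochain`). -/
abbrev RawCochain {𝔞 : GradedCat k 𝒰} (M : Bimod k 𝔞) (n : ℕ) : Type u :=
  ∀ (X Y : Sh 𝔞) (p : Pth (Sh 𝔞) n X Y), PthElts 𝔞 p → M.M (Sh.base p.comp) X.2 Y.2

/-- Restriction of Hochschild cochains along a graded functor, with values in the
pullback bimodule: `(F*ψ)_{(v,B)} = ψ_{(φ v, F B)} ∘ F^{⊗n}`. -/
def Fstar {φ : 𝒱 ⥤ 𝒰} {𝔟 : GradedCat k 𝒱} {𝔞 : GradedCat k 𝒰}
    (F : GradedFunctor k φ 𝔟 𝔞) (M : Bimod k 𝔞) {n : ℕ} (c : RawCochain M n) :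
    RawCochain (Bimod.pullback F M) n :=
  fun X Y p e =>
    M.cst (by rw [Pth.comp_map]; rfl) (c _ _ (p.map (sharpF F)) (eltsMap F e))

/-- Restriction of Hochschild cochains (with values in the identity bimodules) along a
subcartesian graded functor: `(F*ψ)_{(v,B)} = F⁻¹ ∘ ψ_{(φ v, F B)} ∘ F^{⊗n}`. -/
noncomputable def FstarUnit {φ : 𝒱 ⥤ 𝒰} {𝔟 : GradedCat k 𝒱} {𝔞 : GradedCat k 𝒰}
    (F : GradedFunctor k φ 𝔟 𝔞) (hF : F.Subcartesian) {n : ℕ}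
    (c : RawCochain 𝔞.unit n) : RawCochain 𝔟.unit n :=
  fun X Y p e =>
    (Equiv.ofBijective _ (hF (Sh.base p.comp) X.2 Y.2)).symm
      ((𝔞.unit).cst (by rw [Pth.comp_map]; rfl) (c _ _ (p.map (sharpF F)) (eltsMap F e)))

section Multilinear

variable {𝔞 : GradedCat k 𝒰} (M : Bimod k 𝔞)

/-- The multilinearity predicate for (relative) Hochschild cochains: additivity and
`k`-homogeneity in the first slot, and, recursively, multilinearity of all partial
evaluations. -/
def IsML : ∀ {n : ℕ} {W : 𝒰} {B : 𝔞.Obj W} {Y : Sh 𝔞} {v : W ⟶ Y.1},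
    (∀ (Z : Sh 𝔞) (q : Pth (Sh 𝔞) n Y Z), PthElts 𝔞 q →
      M.M (v ≫ Sh.base q.comp) B Z.2) → Prop
  | 0, _, _, _, _, _ => True
  | n + 1, W, B, Y, v, c =>
      (∀ (Y' Z : Sh 𝔞) (a : Y ⟶ Y') (q : Pth (Sh 𝔞) n Y' Z) (e : PthElts 𝔞 q)
        (x x' : 𝔞.Hom (Sh.base a) Y.2 Y'.2),
        c Z (.cons a q) (.cons (x + x') e) =
          c Z (.cons a q) (.cons x e) + c Z (.cons a q) (.cons x' e)) ∧
      (∀ (Y' Z : Sh 𝔞) (a : Y ⟶ Y') (q : Pth (Sh 𝔞) n Y' Z) (e : PthElts 𝔞 q) (r : k)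
        (x : 𝔞.Hom (Sh.base a) Y.2 Y'.2),
        c Z (.cons a q) (.cons (r • x) e) = r • c Z (.cons a q) (.cons x e)) ∧
      (∀ (Y' : Sh 𝔞) (a : Y ⟶ Y') (x : 𝔞.Hom (Sh.base a) Y.2 Y'.2),
        IsML (v := v ≫ Sh.base a)
          (fun Z q e => M.cst (by simp) (c Z (.cons a q) (.cons x e))))

/-- A raw cochain, viewed as a relative cochain. -/
def toRel {n : ℕ} (c : RawCochain M n) (X : Sh 𝔞) :
    ∀ (Z : Sh 𝔞) (q : Pth (Sh 𝔞) n X Z), PthElts 𝔞 q →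
      M.M (𝟙 X.1 ≫ Sh.base q.comp) X.2 Z.2 :=
  fun Z q e => M.cst (by simp) (c X Z q e)

/-- A raw cochain is a genuine Hochschild cochain if it is multilinear. -/
def IsCochain {n : ℕ} (c : RawCochain M n) : Prop :=
  ∀ X : Sh 𝔞, IsML M (toRel M c X)

end Multilinear

section Differential

variable {𝔞 : GradedCat k 𝒰}

/-- The inductive core of the Hochschild differential: `χ` is the relative cochain with
the already-consumed prefix applied, and `G` records the evaluation with the last
morphism of the prefix composed into the first remaining slot (initially, the right
action on the source). -/
def hochD (M : Bimod k 𝔞) {W : 𝒰} (B : 𝔞.Obj W) :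
    ∀ {m : ℕ} {Y Z : Sh 𝔞} (v : W ⟶ Y.1)
      (χ : ∀ (Z' : Sh 𝔞) (q : Pth (Sh 𝔞) m Y Z'), PthElts 𝔞 q →
        M.M (v ≫ Sh.base q.comp) B Z'.2)
      (G : ∀ (Y' Z' : Sh 𝔞) (c : Y ⟶ Y') (z : 𝔞.Hom (Sh.base c) Y.2 Y'.2)
        (q : Pth (Sh 𝔞) m Y' Z'), PthElts 𝔞 q →
        M.M (v ≫ (Sh.base c ≫ Sh.base q.comp)) B Z'.2)
      (p : Pth (Sh 𝔞) (m + 1) Y Z) (e : PthElts 𝔞 p),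
      M.M (v ≫ Sh.base p.comp) B Z.2
  | 0, Y, Z, v, χ, G, .cons a (.nil _), .cons x e' =>
      G _ _ a x (.nil _) e' - M.cst (by simp) (M.actL x (χ _ (.nil _) (.nil _)))
  | m + 1, Y, Z, v, χ, G, .cons a q, .cons x e' =>
      G _ _ a x q e' -
        M.cst (by simp)
          (hochD M B (v ≫ Sh.base a)
            (fun Z' r er => M.cst (by simp) (χ Z' (.cons a r) (.cons x er)))
            (fun Y'' Z' c z r er =>
              M.cst (by simp) (χ Z' (.cons (a ≫ c) r) (.cons (𝔞.comp z x) er)))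
            q e')

/-- The simplicial Hochschild differential on raw cochains. -/
def dRaw (M : Bimod k 𝔞) {n : ℕ} (c : RawCochain M n) : RawCochain M (n + 1) :=
  fun X Z p e =>
    M.cst (by simp)
      (hochD M X.2 (𝟙 X.1)
        (fun Z' q eq => M.cst (by simp) (c X Z' q eq))
        (fun Y' Z' a z q eq => M.cst (by simp) (M.actR (c Y' Z' q eq) z))
        p e)

end Differential

end MapGr

namespace MapGr

variable {k : Type u} [CommRing k]
variable {𝒰 : Type u} [Category.{u} 𝒰]

/-- A subcategory of `𝒰`: a class of objects and a class of morphisms, closed under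
identities and composition. -/
structure Subcat (𝒰 : Type u) [Category.{u} 𝒰] where
  objs : 𝒰 → Prop
  homs : ∀ {X Y : 𝒰}, (X ⟶ Y) → Prop
  dom_mem : ∀ {X Y : 𝒰} (f : X ⟶ Y), homs f → objs X
  cod_mem : ∀ {X Y : 𝒰} (f : X ⟶ Y), homs f → objs Y
  id_mem : ∀ X : 𝒰, objs X → homs (𝟙 X)
  comp_mem : ∀ {X Y Z : 𝒰} (f : X ⟶ Y) (g : Y ⟶ Z), homs f → homs g → homs (f ≫ g)

/-- The category carried by a subcategory. -/
def Subcat.Cat (𝒮 : Subcat 𝒰) : Type u := { X : 𝒰 // 𝒮.objs X }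

instance (𝒮 : Subcat 𝒰) : Category.{u} 𝒮.Cat where
  Hom A B := { f : A.1 ⟶ B.1 // 𝒮.homs f }
  id A := ⟨𝟙 A.1, 𝒮.id_mem A.1 A.2⟩
  comp f g := ⟨f.1 ≫ g.1, 𝒮.comp_mem _ _ f.2 g.2⟩
  id_comp f := by apply Subtype.ext; simp
  comp_id f := by apply Subtype.ext; simp
  assoc f g h := by apply Subtype.ext; simp

/-- The inclusion functor of a subcategory. -/
def Subcat.incl (𝒮 : Subcat 𝒰) : 𝒮.Cat ⥤ 𝒰 where
  obj A := A.1
  map f := f.1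
  map_id _ := rfl
  map_comp _ _ := rfl

/-- The intersection `𝒱₁ ∩ 𝒱₂` of two subcategories. -/
def Subcat.inter (𝒮 𝒯 : Subcat 𝒰) : Subcat 𝒰 where
  objs X := 𝒮.objs X ∧ 𝒯.objs X
  homs f := 𝒮.homs f ∧ 𝒯.homs f
  dom_mem f h := ⟨𝒮.dom_mem f h.1, 𝒯.dom_mem f h.2⟩
  cod_mem f h := ⟨𝒮.cod_mem f h.1, 𝒯.cod_mem f h.2⟩
  id_mem X h := ⟨𝒮.id_mem X h.1, 𝒯.id_mem X h.2⟩
  comp_mem f g h h' := ⟨𝒮.comp_mem f g h.1 h'.1, 𝒯.comp_mem f g h.2 h'.2⟩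

/-- The inclusion `𝒱₁ ∩ 𝒱₂ ⊆ 𝒱₁`. -/
def Subcat.interFst (𝒮 𝒯 : Subcat 𝒰) : (𝒮.inter 𝒯).Cat ⥤ 𝒮.Cat where
  obj A := ⟨A.1, A.2.1⟩
  map f := ⟨f.1, f.2.1⟩
  map_id _ := rfl
  map_comp _ _ := rfl

/-- The inclusion `𝒱₁ ∩ 𝒱₂ ⊆ 𝒱₂`. -/
def Subcat.interSnd (𝒮 𝒯 : Subcat 𝒰) : (𝒮.inter 𝒯).Cat ⥤ 𝒯.Cat where
  obj A := ⟨A.1, A.2.2⟩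
  map f := ⟨f.1, f.2.2⟩
  map_id _ := rfl
  map_comp _ _ := rfl

/-- The canonical (cartesian) graded functor
`(𝒱₁ ∩ 𝒱₂, 𝔞^φ) → (𝒱₁, 𝔞^{φ₁})` over the inclusion `𝒱₁ ∩ 𝒱₂ ⊆ 𝒱₁`. -/
def interRes₁ (𝒮 𝒯 : Subcat 𝒰) (𝔞 : GradedCat k 𝒰) :
    GradedFunctor k (Subcat.interFst 𝒮 𝒯) (𝔞.restrict (𝒮.inter 𝒯).incl)
      (𝔞.restrict 𝒮.incl) where
  obj {V} B := B
  map := fun {V V'} _f {B B'} x => x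
  map_add := by intros; rfl
  map_smul := by intros; rfl
  map_id := by
    intro V B
    exact (𝔞.Hcast_heq ((𝒮.inter 𝒯).incl.map_id V).symm (𝔞.id B)).trans
      (𝔞.Hcast_heq (𝒮.incl.map_id ((Subcat.interFst 𝒮 𝒯).obj V)).symm (𝔞.id B)).symm
  map_comp := by
    intro V V' V'' f g C B A x y
    exact (𝔞.Hcast_heq ((𝒮.inter 𝒯).incl.map_comp g f).symm (𝔞.comp x y)).trans
      (𝔞.Hcast_heq (𝒮.incl.map_comp ((Subcat.interFst 𝒮 𝒯).map g)
        ((Subcat.interFst 𝒮 𝒯).map f)).symm (𝔞.comp x y)).symm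

/-- The canonical (cartesian) graded functor
`(𝒱₁ ∩ 𝒱₂, 𝔞^φ) → (𝒱₂, 𝔞^{φ₂})` over the inclusion `𝒱₁ ∩ 𝒱₂ ⊆ 𝒱₂`. -/
def interRes₂ (𝒮 𝒯 : Subcat 𝒰) (𝔞 : GradedCat k 𝒰) :
    GradedFunctor k (Subcat.interSnd 𝒮 𝒯) (𝔞.restrict (𝒮.inter 𝒯).incl)
      (𝔞.restrict 𝒯.incl) where
  obj {V} B := B
  map := fun {V V'} _f {B B'} x => x
  map_add := by intros; rfl
  map_smul := by intros; rfl
  map_id := by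
    intro V B
    exact (𝔞.Hcast_heq ((𝒮.inter 𝒯).incl.map_id V).symm (𝔞.id B)).trans
      (𝔞.Hcast_heq (𝒯.incl.map_id ((Subcat.interSnd 𝒮 𝒯).obj V)).symm (𝔞.id B)).symm
  map_comp := by
    intro V V' V'' f g C B A x y
    exact (𝔞.Hcast_heq ((𝒮.inter 𝒯).incl.map_comp g f).symm (𝔞.comp x y)).trans
      (𝔞.Hcast_heq (𝒯.incl.map_comp ((Subcat.interSnd 𝒮 𝒯).map g)
        ((Subcat.interSnd 𝒮 𝒯).map f)).symm (𝔞.comp x y)).symm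

theorem interRes₁_subcartesian (𝒮 𝒯 : Subcat 𝒰) (𝔞 : GradedCat k 𝒰) :
    (interRes₁ 𝒮 𝒯 𝔞).Subcartesian := by
  intro V V' f B B'
  exact ⟨fun a b h => h, fun y => ⟨y, rfl⟩⟩

theorem interRes₂_subcartesian (𝒮 𝒯 : Subcat 𝒰) (𝔞 : GradedCat k 𝒰) :
    (interRes₂ 𝒮 𝒯 𝔞).Subcartesian := by
  intro V V' f B B'
  exact ⟨fun a b h => h, fun y => ⟨y, rfl⟩⟩

end MapGr

namespace MapGr

variable {k : Type u} [CommRing k]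
variable {𝒰 : Type u} [Category.{u} 𝒰]

/-- A (two-sided) ideal in a category `𝒰`: a class of morphisms stable under pre- and
post-composition with arbitrary morphisms of `𝒰`. -/
structure CatIdeal (𝒰 : Type u) [Category.{u} 𝒰] where
  mem : ∀ {X Y : 𝒰}, (X ⟶ Y) → Prop
  comp_left : ∀ {X Y Z : 𝒰} (f : X ⟶ Y) (g : Y ⟶ Z), mem g → mem (f ≫ g)
  comp_right : ∀ {X Y Z : 𝒰} (f : X ⟶ Y) (g : Y ⟶ Z), mem f → mem (f ≫ g)

namespace Bimod

variable {𝔞 : GradedCat k 𝒰} (M : Bimod k 𝔞)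

theorem actL_zero {X Y Z : 𝒰} {f : Y ⟶ Z} {g : X ⟶ Y} {B : 𝔞.Obj X} {A : 𝔞.Obj Y}
    {A' : 𝔞.Obj Z} (x : 𝔞.Hom f A A') : M.actL x (0 : M.M g B A) = 0 := by
  have h := M.actL_add_right x (0 : M.M g B A) 0
  rw [add_zero] at h
  exact left_eq_add.mp h

theorem actR_zero {X Y Z : 𝒰} {f : Y ⟶ Z} {g : X ⟶ Y} {B' : 𝔞.Obj X} {B : 𝔞.Obj Y}
    {A : 𝔞.Obj Z} (y : 𝔞.Hom g B' B) : M.actR (0 : M.M f B A) y = 0 := by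
  have h := M.actR_add_left (0 : M.M f B A) 0 y
  rw [add_zero] at h
  exact left_eq_add.mp h

/-- The left action, as a `k`-linear map. -/
def actLlin {X Y Z : 𝒰} {f : Y ⟶ Z} {g : X ⟶ Y} {B : 𝔞.Obj X} {A : 𝔞.Obj Y}
    {A' : 𝔞.Obj Z} (x : 𝔞.Hom f A A') : M.M g B A →ₗ[k] M.M (g ≫ f) B A' where
  toFun := M.actL x
  map_add' := M.actL_add_right x
  map_smul' r m := M.actL_smul_right r x m

/-- The right action, as a `k`-linear map. -/
def actRlin {X Y Z : 𝒰} {f : Y ⟶ Z} {g : X ⟶ Y} {B' : 𝔞.Obj X} {B : 𝔞.Obj Y}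
    {A : 𝔞.Obj Z} (y : 𝔞.Hom g B' B) : M.M f B A →ₗ[k] M.M (g ≫ f) B' A where
  toFun m := M.actR m y
  map_add' m m' := M.actR_add_left m m' y
  map_smul' r m := M.actR_smul_left r m y

open Classical in
/-- The `𝒵`-part of the values of `M`: all of `M_u` if `u ∈ 𝒵`, and `0` otherwise. -/
noncomputable def zSub (Z : CatIdeal 𝒰) {X Y : 𝒰} (f : X ⟶ Y) (B : 𝔞.Obj X)
    (A : 𝔞.Obj Y) : Submodule k (M.M f B A) :=
  if Z.mem f then ⊤ else ⊥

theorem zSub_actL_le (Z : CatIdeal 𝒰) {X Y Z' : 𝒰} {f : Y ⟶ Z'} {g : X ⟶ Y}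
    {B : 𝔞.Obj X} {A : 𝔞.Obj Y} {A' : 𝔞.Obj Z'} (x : 𝔞.Hom f A A') :
    ∀ m ∈ M.zSub Z g B A, M.actL x m ∈ M.zSub Z (g ≫ f) B A' := by
  intro m hm
  by_cases h : Z.mem g
  · simp [zSub, Z.comp_right g f h]
  · have hm0 : m = 0 := by simpa [zSub, h] using hm
    rw [hm0, M.actL_zero]
    exact Submodule.zero_mem _

theorem zSub_actR_le (Z : CatIdeal 𝒰) {X Y Z' : 𝒰} {f : Y ⟶ Z'} {g : X ⟶ Y}
    {B' : 𝔞.Obj X} {B : 𝔞.Obj Y} {A : 𝔞.Obj Z'} (y : 𝔞.Hom g B' B) :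
    ∀ m ∈ M.zSub Z f B A, M.actR m y ∈ M.zSub Z (g ≫ f) B' A := by
  intro m hm
  by_cases h : Z.mem f
  · simp [zSub, Z.comp_left g f h]
  · have hm0 : m = 0 := by simpa [zSub, h] using hm
    rw [hm0, M.actR_zero]
    exact Submodule.zero_mem _

theorem zheq (Z : CatIdeal 𝒰) {X Y : 𝒰} {f g : X ⟶ Y} (hfg : f = g) {B : 𝔞.Obj X}
    {A : 𝔞.Obj Y} {x : ↥(M.zSub Z f B A)} {y : ↥(M.zSub Z g B A)}
    (h : HEq x.1 y.1) : HEq x y := by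
  subst hfg
  exact heq_of_eq (Subtype.ext (eq_of_heq h))

/-- The sub-bimodule `M_𝒵 ⊆ M` supported on an ideal `𝒵`. -/
noncomputable def subBimod (Z : CatIdeal 𝒰) : Bimod k 𝔞 where
  M f B A := ModuleCat.of k ↥(M.zSub Z f B A)
  actL x m := ⟨M.actL x m.1, M.zSub_actL_le Z x m.1 m.2⟩
  actR m y := ⟨M.actR m.1 y, M.zSub_actR_le Z y m.1 m.2⟩
  actL_add_left := by
    intro X Y Z' f g B A A' x x' m
    exact Subtype.ext (M.actL_add_left x x' m.1)
  actL_add_right := by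
    intro X Y Z' f g B A A' x m m'
    exact Subtype.ext (M.actL_add_right x m.1 m'.1)
  actL_smul_left := by
    intro X Y Z' f g B A A' r x m
    exact Subtype.ext (M.actL_smul_left r x m.1)
  actL_smul_right := by
    intro X Y Z' f g B A A' r x m
    exact Subtype.ext (M.actL_smul_right r x m.1)
  actR_add_left := by
    intro X Y Z' f g B' B A m m' y
    exact Subtype.ext (M.actR_add_left m.1 m'.1 y)
  actR_add_right := by
    intro X Y Z' f g B' B A m y y'
    exact Subtype.ext (M.actR_add_right m.1 y y')
  actR_smul_left := by
    intro X Y Z' f g B' B A r m y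
    exact Subtype.ext (M.actR_smul_left r m.1 y)
  actR_smul_right := by
    intro X Y Z' f g B' B A r m y
    exact Subtype.ext (M.actR_smul_right r m.1 y)
  actL_id := by
    intro X Y g B A m
    exact M.zheq Z (Category.comp_id g) (M.actL_id m.1)
  actR_id := by
    intro X Y f B A m
    exact M.zheq Z (Category.id_comp f) (M.actR_id m.1)
  actL_actL := by
    intro W X Y Z' f' f g B A A' A'' x y m
    exact M.zheq Z (by simp) (M.actL_actL x y m.1)
  actR_actR := by
    intro W X Y Z' f g h B'' B' B A m y y'
    exact M.zheq Z (by simp) (M.actR_actR m.1 y y')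
  actL_actR := by
    intro W X Y Z' f g h B' B A A' x m y
    exact M.zheq Z (by simp) (M.actL_actR x m.1 y)

theorem quot_heq (Z : CatIdeal 𝒰) {X Y : 𝒰} {f g : X ⟶ Y} (hfg : f = g) {B : 𝔞.Obj X}
    {A : 𝔞.Obj Y} {m : M.M f B A} {m' : M.M g B A} (h : HEq m m') :
    HEq (Submodule.Quotient.mk (p := M.zSub Z f B A) m)
      (Submodule.Quotient.mk (p := M.zSub Z g B A) m') := by
  subst hfg
  rw [eq_of_heq h]

/-- The quotient bimodule `M_𝒱 = M / M_𝒵`: its values are `M_u` for `u ∈ 𝒱` and `0`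
for `u ∈ 𝒵`. -/
noncomputable def quotBimod (Z : CatIdeal 𝒰) : Bimod k 𝔞 where
  M f B A := ModuleCat.of k (M.M f B A ⧸ M.zSub Z f B A)
  actL x m := Submodule.mapQ _ _ (M.actLlin x) (M.zSub_actL_le Z x) m
  actR m y := Submodule.mapQ _ _ (M.actRlin y) (M.zSub_actR_le Z y) m
  actL_add_left := by
    intro X Y Z' f g B A A' x x' m
    obtain ⟨m, rfl⟩ := Submodule.Quotient.mk_surjective _ m
    dsimp only
    show Submodule.Quotient.mk (M.actL (x + x') m) = _
    rw [M.actL_add_left]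
    rfl
  actL_add_right := by
    intro X Y Z' f g B A A' x m m'
    exact map_add _ m m'
  actL_smul_left := by
    intro X Y Z' f g B A A' r x m
    obtain ⟨m, rfl⟩ := Submodule.Quotient.mk_surjective _ m
    dsimp only
    show Submodule.Quotient.mk (M.actL (r • x) m) = _
    rw [M.actL_smul_left]
    rfl
  actL_smul_right := by
    intro X Y Z' f g B A A' r x m
    exact map_smul _ r m
  actR_add_left := by
    intro X Y Z' f g B' B A m m' y
    exact map_add _ m m'
  actR_add_right := by
    intro X Y Z' f g B' B A m y y'
    obtain ⟨m, rfl⟩ := Submodule.Quotient.mk_surjective _ m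
    dsimp only
    show Submodule.Quotient.mk (M.actR m (y + y')) = _
    rw [M.actR_add_right]
    rfl
  actR_smul_left := by
    intro X Y Z' f g B' B A r m y
    exact map_smul _ r m
  actR_smul_right := by
    intro X Y Z' f g B' B A r m y
    obtain ⟨m, rfl⟩ := Submodule.Quotient.mk_surjective _ m
    dsimp only
    show Submodule.Quotient.mk (M.actR m (r • y)) = _
    rw [M.actR_smul_right]
    rfl
  actL_id := by
    intro X Y g B A m
    obtain ⟨m, rfl⟩ := Submodule.Quotient.mk_surjective _ m
    dsimp only
    exact M.quot_heq Z (Category.comp_id g) (M.actL_id m)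
  actR_id := by
    intro X Y f B A m
    obtain ⟨m, rfl⟩ := Submodule.Quotient.mk_surjective _ m
    dsimp only
    exact M.quot_heq Z (Category.id_comp f) (M.actR_id m)
  actL_actL := by
    intro W X Y Z' f' f g B A A' A'' x y m
    obtain ⟨m, rfl⟩ := Submodule.Quotient.mk_surjective _ m
    dsimp only
    exact M.quot_heq Z (by simp) (M.actL_actL x y m)
  actR_actR := by
    intro W X Y Z' f g h B'' B' B A m y y'
    obtain ⟨m, rfl⟩ := Submodule.Quotient.mk_surjective _ m
    dsimp only
    exact M.quot_heq Z (by simp) (M.actR_actR m y y')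
  actL_actR := by
    intro W X Y Z' f g h B' B A A' x m y
    obtain ⟨m, rfl⟩ := Submodule.Quotient.mk_surjective _ m
    dsimp only
    exact M.quot_heq Z (by simp) (M.actL_actR x m y)

end Bimod

/-- The canonical inclusion `C_𝒰(𝔞, M_𝒵) → C_𝒰(𝔞, M)` on raw cochains. -/
noncomputable def subInto {𝔞 : GradedCat k 𝒰} (M : Bimod k 𝔞) (Z : CatIdeal 𝒰) {n : ℕ}
    (c : RawCochain (M.subBimod Z) n) : RawCochain M n :=
  fun X Y p e => (c X Y p e).1

/-- The canonical projection `C_𝒰(𝔞, M) → C_𝒰(𝔞, M_𝒱)` on raw cochains. -/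
noncomputable def quotOnto {𝔞 : GradedCat k 𝒰} (M : Bimod k 𝔞) (Z : CatIdeal 𝒰) {n : ℕ}
    (c : RawCochain M n) : RawCochain (M.quotBimod Z) n :=
  fun X Y p e => Submodule.Quotient.mk (c X Y p e)

end MapGr

namespace MapGr

section Aux

variable {k : Type u} [CommRing k] {𝒰 : Type u} [Category.{u} 𝒰]

namespace Bimod

variable {𝔞 : GradedCat k 𝒰} (M : Bimod k 𝔞)

theorem cst_zero {X Y : 𝒰} {f g : X ⟶ Y} (h : f = g) {B : 𝔞.Obj X} {A : 𝔞.Obj Y} :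
    M.cst h (0 : M.M f B A) = 0 := by
  have := M.cst_add h (0 : M.M f B A) 0
  rw [add_zero] at this
  exact (left_eq_add.mp this)

theorem cst_inj {X Y : 𝒰} {f g : X ⟶ Y} (h : f = g) {B : 𝔞.Obj X} {A : 𝔞.Obj Y}
    {a b : M.M f B A} (hab : M.cst h a = M.cst h b) : a = b := by
  subst h
  rwa [eq_of_heq (M.cst_heq rfl a), eq_of_heq (M.cst_heq rfl b)] at hab

theorem cst_eq_zero {X Y : 𝒰} {f g : X ⟶ Y} (h : f = g) {B : 𝔞.Obj X} {A : 𝔞.Obj Y}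
    {a : M.M f B A} (ha : M.cst h a = 0) : a = 0 := by
  rw [← M.cst_zero h] at ha
  exact M.cst_inj h ha

variable (Z : CatIdeal 𝒰)

theorem cst_val {X Y : 𝒰} {f g : X ⟶ Y} (h : f = g) {B : 𝔞.Obj X} {A : 𝔞.Obj Y}
    (m : (M.subBimod Z).M f B A) :
    ((M.subBimod Z).cst h m).1 = M.cst h m.1 := by
  subst h
  rw [eq_of_heq ((M.subBimod Z).cst_heq rfl m), eq_of_heq (M.cst_heq rfl m.1)]

theorem cst_mk {X Y : 𝒰} {f g : X ⟶ Y} (h : f = g) {B : 𝔞.Obj X} {A : 𝔞.Obj Y}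
    (m : M.M f B A) :
    (M.quotBimod Z).cst h (Submodule.Quotient.mk m) = Submodule.Quotient.mk (M.cst h m) := by
  subst h
  erw [eq_of_heq ((M.quotBimod Z).cst_heq rfl _), eq_of_heq (M.cst_heq rfl m)]

theorem quot_subsingleton {X Y : 𝒰} {f : X ⟶ Y} (hf : Z.mem f) {B : 𝔞.Obj X}
    {A : 𝔞.Obj Y} (x y : (M.quotBimod Z).M f B A) : x = y := by
  obtain ⟨a, rfl⟩ := Submodule.Quotient.mk_surjective _ x
  obtain ⟨b, rfl⟩ := Submodule.Quotient.mk_surjective _ y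
  erw [Submodule.Quotient.eq]
  simp [Bimod.zSub, hf]

theorem zSub_eq_top {X Y : 𝒰} {f : X ⟶ Y} (hm : Z.mem f) {B : 𝔞.Obj X}
    {A : 𝔞.Obj Y} : M.zSub Z f B A = ⊤ := if_pos hm

theorem zSub_eq_bot {X Y : 𝒰} {f : X ⟶ Y} (hm : ¬ Z.mem f) {B : 𝔞.Obj X}
    {A : 𝔞.Obj Y} : M.zSub Z f B A = ⊥ := if_neg hm

open Classical in
/-- Un-quotienting map `M_𝒱 → M`, zero on `𝒵`. -/
noncomputable def lower {X Y : 𝒰} {f : X ⟶ Y} {B : 𝔞.Obj X} {A : 𝔞.Obj Y}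
    (m : (M.quotBimod Z).M f B A) : M.M f B A :=
  if h : Z.mem f then 0
  else (Submodule.quotEquivOfEqBot _ (by rw [Bimod.zSub, if_neg h]) : _ ≃ₗ[k] M.M f B A) m

theorem lower_add {X Y : 𝒰} {f : X ⟶ Y} {B : 𝔞.Obj X} {A : 𝔞.Obj Y}
    (m m' : (M.quotBimod Z).M f B A) :
    M.lower Z (m + m') = M.lower Z m + M.lower Z m' := by
  unfold lower; split
  · rw [add_zero]
  · exact map_add _ m m'

theorem lower_smul {X Y : 𝒰} {f : X ⟶ Y} {B : 𝔞.Obj X} {A : 𝔞.Obj Y} (r : k)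
    (m : (M.quotBimod Z).M f B A) : M.lower Z (r • m) = r • M.lower Z m := by
  unfold lower; split
  · rw [smul_zero]
  · exact map_smul _ r m

theorem lower_cst {X Y : 𝒰} {f g : X ⟶ Y} (h : f = g) {B : 𝔞.Obj X} {A : 𝔞.Obj Y}
    (m : (M.quotBimod Z).M f B A) :
    M.lower Z ((M.quotBimod Z).cst h m) = M.cst h (M.lower Z m) := by
  subst h
  rw [eq_of_heq ((M.quotBimod Z).cst_heq rfl m), eq_of_heq (M.cst_heq rfl _)]

theorem lower_mk {X Y : 𝒰} {f : X ⟶ Y} (hf : ¬ Z.mem f) {B : 𝔞.Obj X} {A : 𝔞.Obj Y}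
    (m : M.M f B A) : M.lower Z (Submodule.Quotient.mk m) = m := by
  unfold lower
  rw [dif_neg hf]
  rfl

theorem mk_lower {X Y : 𝒰} {f : X ⟶ Y} (hf : ¬ Z.mem f) {B : 𝔞.Obj X} {A : 𝔞.Obj Y}
    (x : (M.quotBimod Z).M f B A) :
    (Submodule.Quotient.mk (M.lower Z x) : (M.quotBimod Z).M f B A) = x := by
  obtain ⟨a, rfl⟩ := Submodule.Quotient.mk_surjective _ x
  rw [M.lower_mk Z hf]

theorem lower_inj {X Y : 𝒰} {f : X ⟶ Y} (hf : ¬ Z.mem f) {B : 𝔞.Obj X} {A : 𝔞.Obj Y}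
    {x y : (M.quotBimod Z).M f B A} (h : M.lower Z x = M.lower Z y) : x = y := by
  rw [← M.mk_lower Z hf x, ← M.mk_lower Z hf y, h]

end Bimod

section ML

variable {𝔞 : GradedCat k 𝒰}

theorem isML_zero (M : Bimod k 𝔞) :
    ∀ (m : ℕ) {W : 𝒰} {B : 𝔞.Obj W} {Y : Sh 𝔞} {v : W ⟶ Y.1},
      IsML M (fun (Z : Sh 𝔞) (q : Pth (Sh 𝔞) m Y Z) (_e : PthElts 𝔞 q) =>
        (0 : M.M (v ≫ Sh.base q.comp) B Z.2))
  | 0, _, _, _, _ => trivial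
  | (m + 1), W, B, Y, v => by
    refine ⟨fun _ _ _ _ _ _ _ => by rw [add_zero], fun _ _ _ _ _ r _ => by rw [smul_zero],
      fun Y' a x => ?_⟩
    have h : (fun (Z : Sh 𝔞) (q : Pth (Sh 𝔞) m Y' Z) (e : PthElts 𝔞 q) =>
        M.cst (by simp) (0 : M.M (v ≫ Sh.base (Pth.cons a q).comp) B Z.2)) =
        (fun (Z : Sh 𝔞) (q : Pth (Sh 𝔞) m Y' Z) (_e : PthElts 𝔞 q) =>
        (0 : M.M ((v ≫ Sh.base a) ≫ Sh.base q.comp) B Z.2)) := by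
      funext Z q e
      erw [M.cst_zero]
    exact h ▸ isML_zero M m

theorem isML_map {M N : Bimod k 𝔞}
    (τ : ∀ {X Y : 𝒰} {f : X ⟶ Y} {B : 𝔞.Obj X} {A : 𝔞.Obj Y}, M.M f B A → N.M f B A)
    (hadd : ∀ {X Y : 𝒰} {f : X ⟶ Y} {B : 𝔞.Obj X} {A : 𝔞.Obj Y} (a b : M.M f B A),
      τ (a + b) = τ a + τ b)
    (hsmul : ∀ {X Y : 𝒰} {f : X ⟶ Y} {B : 𝔞.Obj X} {A : 𝔞.Obj Y} (r : k) (a : M.M f B A),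
      τ (r • a) = r • τ a)
    (hcst : ∀ {X Y : 𝒰} {f g : X ⟶ Y} (h : f = g) {B : 𝔞.Obj X} {A : 𝔞.Obj Y}
      (a : M.M f B A), τ (M.cst h a) = N.cst h (τ a)) :
    ∀ (m : ℕ) {W : 𝒰} {B : 𝔞.Obj W} {Y : Sh 𝔞} {v : W ⟶ Y.1}
      (c : ∀ (Z : Sh 𝔞) (q : Pth (Sh 𝔞) m Y Z), PthElts 𝔞 q →
        M.M (v ≫ Sh.base q.comp) B Z.2),
      IsML M c → IsML N (fun Z q e => τ (c Z q e))
  | 0, _, _, _, _, _, _ => trivial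
  | (m + 1), W, B, Y, v, c, h => by
    refine ⟨fun Y' Z a q e x x' => ?_, fun Y' Z a q e r x => ?_, fun Y' a x => ?_⟩
    · dsimp only
      rw [h.1 Y' Z a q e x x', hadd]
    · dsimp only
      rw [h.2.1 Y' Z a q e r x, hsmul]
    · have hc := isML_map τ hadd hsmul hcst m _ (h.2.2 Y' a x)
      convert hc using 2
      funext q e
      dsimp only
      erw [hcst]

theorem isML_map_inj {M N : Bimod k 𝔞}
    (τ : ∀ {X Y : 𝒰} {f : X ⟶ Y} {B : 𝔞.Obj X} {A : 𝔞.Obj Y}, M.M f B A → N.M f B A)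
    (hadd : ∀ {X Y : 𝒰} {f : X ⟶ Y} {B : 𝔞.Obj X} {A : 𝔞.Obj Y} (a b : M.M f B A),
      τ (a + b) = τ a + τ b)
    (hsmul : ∀ {X Y : 𝒰} {f : X ⟶ Y} {B : 𝔞.Obj X} {A : 𝔞.Obj Y} (r : k) (a : M.M f B A),
      τ (r • a) = r • τ a)
    (hcst : ∀ {X Y : 𝒰} {f g : X ⟶ Y} (h : f = g) {B : 𝔞.Obj X} {A : 𝔞.Obj Y}
      (a : M.M f B A), τ (M.cst h a) = N.cst h (τ a))
    (hinj : ∀ {X Y : 𝒰} {f : X ⟶ Y} {B : 𝔞.Obj X} {A : 𝔞.Obj Y} {a b : M.M f B A},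
      τ a = τ b → a = b) :
    ∀ (m : ℕ) {W : 𝒰} {B : 𝔞.Obj W} {Y : Sh 𝔞} {v : W ⟶ Y.1}
      (c : ∀ (Z : Sh 𝔞) (q : Pth (Sh 𝔞) m Y Z), PthElts 𝔞 q →
        M.M (v ≫ Sh.base q.comp) B Z.2),
      IsML N (fun Z q e => τ (c Z q e)) → IsML M c
  | 0, _, _, _, _, _, _ => trivial
  | (m + 1), W, B, Y, v, c, h => by
    refine ⟨fun Y' Z a q e x x' => ?_, fun Y' Z a q e r x => ?_, fun Y' a x => ?_⟩
    · refine hinj ?_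
      have := h.1 Y' Z a q e x x'
      dsimp only at this
      rw [hadd, this]
    · refine hinj ?_
      have := h.2.1 Y' Z a q e r x
      dsimp only at this
      rw [hsmul, this]
    · refine isML_map_inj τ hadd hsmul hcst hinj m _ ?_
      have hc := h.2.2 Y' a x
      convert hc using 2
      funext q e
      dsimp only
      erw [hcst]

theorem hochD_map {M N : Bimod k 𝔞}
    (τ : ∀ {X Y : 𝒰} {f : X ⟶ Y} {B : 𝔞.Obj X} {A : 𝔞.Obj Y}, M.M f B A → N.M f B A)
    (hsub : ∀ {X Y : 𝒰} {f : X ⟶ Y} {B : 𝔞.Obj X} {A : 𝔞.Obj Y} (a b : M.M f B A),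
      τ (a - b) = τ a - τ b)
    (hcst : ∀ {X Y : 𝒰} {f g : X ⟶ Y} (h : f = g) {B : 𝔞.Obj X} {A : 𝔞.Obj Y}
      (a : M.M f B A), τ (M.cst h a) = N.cst h (τ a))
    (hactL : ∀ {X Y Z : 𝒰} {f : Y ⟶ Z} {g : X ⟶ Y} {B : 𝔞.Obj X} {A : 𝔞.Obj Y}
      {A' : 𝔞.Obj Z} (x : 𝔞.Hom f A A') (m : M.M g B A),
      τ (M.actL x m) = N.actL x (τ m))
    {W : 𝒰} (B : 𝔞.Obj W) :
    ∀ (m : ℕ) {Y Z : Sh 𝔞} (v : W ⟶ Y.1)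
      (χ : ∀ (Z' : Sh 𝔞) (q : Pth (Sh 𝔞) m Y Z'), PthElts 𝔞 q →
        M.M (v ≫ Sh.base q.comp) B Z'.2)
      (G : ∀ (Y' Z' : Sh 𝔞) (c : Y ⟶ Y') (z : 𝔞.Hom (Sh.base c) Y.2 Y'.2)
        (q : Pth (Sh 𝔞) m Y' Z'), PthElts 𝔞 q →
        M.M (v ≫ (Sh.base c ≫ Sh.base q.comp)) B Z'.2)
      (p : Pth (Sh 𝔞) (m + 1) Y Z) (e : PthElts 𝔞 p),
      τ (hochD M B v χ G p e) =
        hochD N B v (fun Z' q eq => τ (χ Z' q eq))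
          (fun Y' Z' c z q eq => τ (G Y' Z' c z q eq)) p e
  | 0, Y, Z, v, χ, G, .cons a (.nil _), .cons x e' => by
    show τ (G _ _ a x (Pth.nil _) e' -
        M.cst (by simp) (M.actL x (χ _ (Pth.nil _) (PthElts.nil _)))) = _
    erw [hsub, hcst, hactL]
    rfl
  | (m + 1), Y, Z, v, χ, G, .cons a q, .cons x e' => by
    show τ (G _ _ a x q e' -
        M.cst (by simp)
          (hochD M B (v ≫ Sh.base a)
            (fun Z' r er => M.cst (by simp) (χ Z' (.cons a r) (.cons x er)))
            (fun Y'' Z' c z r er =>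
              M.cst (by simp) (χ Z' (.cons (a ≫ c) r) (.cons (𝔞.comp z x) er)))
            q e')) = _
    erw [hsub, hcst, hochD_map τ hsub hcst hactL B m (v ≫ Sh.base a) _ _ q e']
    congr 2
    congr 1
    · funext Z' r er
      erw [hcst]
    · funext Y'' Z' c z r er
      erw [hcst]

section DChain

variable (M : Bimod k 𝔞) (Z : CatIdeal 𝒰)

theorem subInto_dRaw {n : ℕ} (d : RawCochain (M.subBimod Z) n) :
    subInto M Z (dRaw (M.subBimod Z) d) = dRaw M (subInto M Z d) := by
  funext X Zo p e
  show ((M.subBimod Z).cst _ (hochD (M.subBimod Z) X.2 (𝟙 X.1) _ _ p e)).1 = _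
  rw [M.cst_val Z]
  rw [hochD_map (M := M.subBimod Z) (N := M) (fun m => m.1) (by intros; rfl)
    (by intros; erw [M.cst_val Z]) (by intros; rfl) X.2 n (𝟙 X.1) _ _ p e]
  congr 1
  congr 1
  · funext Z' q eq
    rw [M.cst_val Z]
    rfl
  · funext Y' Z' a z q eq
    rw [M.cst_val Z]
    rfl

theorem quot_mk_sub {X Y : 𝒰} {f : X ⟶ Y} {B : 𝔞.Obj X} {A : 𝔞.Obj Y}
    (a b : M.M f B A) :
    (Submodule.Quotient.mk (a - b) : (M.quotBimod Z).M f B A) =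
      Submodule.Quotient.mk a - Submodule.Quotient.mk b :=
  rfl

theorem quot_actL_mk {X Y Z' : 𝒰} {f : Y ⟶ Z'} {g : X ⟶ Y} {B : 𝔞.Obj X}
    {A : 𝔞.Obj Y} {A' : 𝔞.Obj Z'} (x : 𝔞.Hom f A A') (m : M.M g B A) :
    (M.quotBimod Z).actL x (Submodule.Quotient.mk m) =
      Submodule.Quotient.mk (M.actL x m) :=
  rfl

theorem quot_actR_mk {X Y Z' : 𝒰} {f : Y ⟶ Z'} {g : X ⟶ Y} {B' : 𝔞.Obj X}
    {B : 𝔞.Obj Y} {A : 𝔞.Obj Z'} (m : M.M f B A) (y : 𝔞.Hom g B' B) :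
    (M.quotBimod Z).actR (Submodule.Quotient.mk m) y =
      Submodule.Quotient.mk (M.actR m y) :=
  rfl

theorem quotOnto_dRaw {n : ℕ} (c : RawCochain M n) :
    quotOnto M Z (dRaw M c) = dRaw (M.quotBimod Z) (quotOnto M Z c) := by
  funext X Zo p e
  show (Submodule.Quotient.mk (M.cst _ (hochD M X.2 (𝟙 X.1) _ _ p e)) :
    (M.quotBimod Z).M _ _ _) = _
  rw [← M.cst_mk Z]
  rw [hochD_map (M := M) (N := M.quotBimod Z) (fun m => Submodule.Quotient.mk m)
    (by intros; erw [quot_mk_sub M Z]; rfl) (by intros; erw [M.cst_mk Z])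
    (by intros; erw [quot_actL_mk M Z]) X.2 n (𝟙 X.1) _ _ p e]
  congr 1
  congr 1
  · funext Z' q eq
    rw [← M.cst_mk Z]
    rfl
  · funext Y' Z' a z q eq
    rw [← M.cst_mk Z, ← quot_actR_mk M Z]
    rfl

end DChain

end ML

section Lift

variable {𝔞 : GradedCat k 𝒰}

theorem pthElts_cons_congr {n : ℕ} {X Y₁ Z : Sh 𝔞} {f : X ⟶ Y₁}
    {p q : Pth (Sh 𝔞) n Y₁ Z} (hpq : p = q) (x : 𝔞.Hom (Sh.base f) X.2 Y₁.2)
    {e₁ : PthElts 𝔞 p} {e₂ : PthElts 𝔞 q} (h : HEq e₁ e₂) :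
    HEq (PthElts.cons (f := f) x e₁) (PthElts.cons x e₂) := by
  subst hpq
  rw [eq_of_heq h]

theorem rawCongr {M : Bimod k 𝔞} {n : ℕ} (c : RawCochain M n) {X Y : Sh 𝔞}
    {p q : Pth (Sh 𝔞) n X Y} (hpq : p = q) {e : PthElts 𝔞 p} {e' : PthElts 𝔞 q}
    (he : HEq e e') : HEq (c X Y p e) (c X Y q e') := by
  subst hpq
  rw [eq_of_heq he]

variable (𝒮 : Subcat 𝒰)

/-- All morphisms of a path lie in the subcategory. -/
def AllS : ∀ {n : ℕ} {X Y : Sh 𝔞}, Pth (Sh 𝔞) n X Y → Prop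
  | _, _, _, .nil _ => True
  | _, _, _, .cons f p => 𝒮.homs (Sh.base f) ∧ AllS p

theorem allS_cod : ∀ {n : ℕ} {X Y : Sh 𝔞} (p : Pth (Sh 𝔞) n X Y),
    AllS 𝒮 p → 𝒮.objs X.1 → 𝒮.objs Y.1
  | _, _, _, .nil _, _, hX => hX
  | _, _, _, .cons f p, hp, _ => allS_cod p hp.2 (𝒮.cod_mem (Sh.base f) hp.1)

variable (𝔞) in
/-- Lift of an object of `Sh 𝔞` to `Sh (𝔞.restrict 𝒮.incl)`. -/
def shLift (X : Sh 𝔞) (hX : 𝒮.objs X.1) : Sh (𝔞.restrict 𝒮.incl) :=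
  ⟨⟨X.1, hX⟩, X.2⟩

/-- Lift of a path lying in the subcategory. -/
def liftP : ∀ {n : ℕ} {X Y : Sh 𝔞} (p : Pth (Sh 𝔞) n X Y) (hp : AllS 𝒮 p)
    (hX : 𝒮.objs X.1) (hY : 𝒮.objs Y.1),
    Pth (Sh (𝔞.restrict 𝒮.incl)) n (shLift 𝔞 𝒮 X hX) (shLift 𝔞 𝒮 Y hY)
  | _, _, _, .nil _, _, _, _ => .nil _
  | _, _, _, .cons f p, hp, hX, hY =>
      .cons (show (shLift 𝔞 𝒮 _ hX) ⟶ (shLift 𝔞 𝒮 _ (𝒮.cod_mem (Sh.base f) hp.1)) from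
          ⟨Sh.base f, hp.1⟩)
        (liftP p hp.2 (𝒮.cod_mem (Sh.base f) hp.1) hY)

/-- Lift of a family of elements over a path lying in the subcategory. -/
def liftE : ∀ {n : ℕ} {X Y : Sh 𝔞} {p : Pth (Sh 𝔞) n X Y} (hp : AllS 𝒮 p)
    (hX : 𝒮.objs X.1) (hY : 𝒮.objs Y.1), PthElts 𝔞 p →
    PthElts (𝔞.restrict 𝒮.incl) (liftP 𝒮 p hp hX hY)
  | _, _, _, _, _, _, _, .nil _ => .nil _
  | _, _, _, _, hp, hX, hY, .cons x e => .cons x (liftE hp.2 _ hY e)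

theorem liftP_map : ∀ {n : ℕ} {X Y : Sh 𝔞} (p : Pth (Sh 𝔞) n X Y) (hp : AllS 𝒮 p)
    (hX : 𝒮.objs X.1) (hY : 𝒮.objs Y.1),
    (liftP 𝒮 p hp hX hY).map (sharpF (restrictProj 𝒮.incl 𝔞)) = p
  | _, _, _, .nil _, _, _, _ => rfl
  | _, _, _, .cons f p, hp, hX, hY =>
      congrArg (Pth.cons f) (liftP_map p hp.2 (𝒮.cod_mem (Sh.base f) hp.1) hY)

theorem liftE_heq : ∀ {n : ℕ} {X Y : Sh 𝔞} {p : Pth (Sh 𝔞) n X Y} (hp : AllS 𝒮 p)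
    (hX : 𝒮.objs X.1) (hY : 𝒮.objs Y.1) (e : PthElts 𝔞 p),
    HEq (eltsMap (restrictProj 𝒮.incl 𝔞) (liftE 𝒮 hp hX hY e)) e
  | _, _, _, _, _, _, _, .nil _ => HEq.rfl
  | _, _, _, _, hp, hX, hY, .cons x e =>
      pthElts_cons_congr (liftP_map 𝒮 _ hp.2 (𝒮.cod_mem _ hp.1) hY) x
        (liftE_heq hp.2 _ hY e)

theorem allS_map : ∀ {n : ℕ} {Xb Yb : Sh (𝔞.restrict 𝒮.incl)}
    (q : Pth (Sh (𝔞.restrict 𝒮.incl)) n Xb Yb),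
    AllS 𝒮 (q.map (sharpF (restrictProj 𝒮.incl 𝔞)))
  | _, _, _, .nil _ => trivial
  | _, _, _, .cons g q => ⟨(Sh.base g).2, allS_map q⟩

theorem liftP_map_self : ∀ {n : ℕ} {Xb Yb : Sh (𝔞.restrict 𝒮.incl)}
    (q : Pth (Sh (𝔞.restrict 𝒮.incl)) n Xb Yb) (hp hX hY),
    liftP 𝒮 (q.map (sharpF (restrictProj 𝒮.incl 𝔞))) hp hX hY = q
  | _, _, _, .nil _, _, _, _ => rfl
  | _, _, _, .cons g q, hp, hX, hY =>
      congrArg (Pth.cons g) (liftP_map_self q hp.2 _ hY)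

theorem liftE_self_heq : ∀ {n : ℕ} {Xb Yb : Sh (𝔞.restrict 𝒮.incl)}
    {q : Pth (Sh (𝔞.restrict 𝒮.incl)) n Xb Yb} (e : PthElts (𝔞.restrict 𝒮.incl) q)
    (hp hX hY),
    HEq (liftE 𝒮 hp hX hY (eltsMap (restrictProj 𝒮.incl 𝔞) e)) e
  | _, _, _, _, .nil _, _, _, _ => HEq.rfl
  | _, _, _, _, .cons x e, hp, hX, hY =>
      pthElts_cons_congr (liftP_map_self 𝒮 _ hp.2 _ hY) x (liftE_self_heq e hp.2 _ hY)

theorem lift_comp_eq {n : ℕ} {X Y : Sh 𝔞} (p : Pth (Sh 𝔞) n X Y) (hp : AllS 𝒮 p)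
    (hX : 𝒮.objs X.1) (hY : 𝒮.objs Y.1) :
    𝒮.incl.map (Sh.base ((liftP 𝒮 p hp hX hY).comp)) = Sh.base p.comp := by
  conv_rhs => rw [← liftP_map 𝒮 p hp hX hY]
  erw [Pth.comp_map]
  rfl

theorem keyZ (Z : CatIdeal 𝒰)
    (hdec : ∀ {X Y : 𝒰} (f : X ⟶ Y), (𝒮.homs f ∨ Z.mem f) ∧ ¬ (𝒮.homs f ∧ Z.mem f)) :
    ∀ {n : ℕ} {X Y : Sh 𝔞} (p : Pth (Sh 𝔞) n X Y), ¬ Z.mem (Sh.base p.comp) →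
      AllS 𝒮 p ∧ 𝒮.objs X.1 ∧ 𝒮.objs Y.1
  | _, _, _, .nil X, h => by
    have hid : 𝒮.homs (𝟙 X.1) := ((hdec (𝟙 X.1)).1).resolve_right h
    exact ⟨trivial, 𝒮.dom_mem _ hid, 𝒮.dom_mem _ hid⟩
  | _, _, _, .cons f p, h => by
    have hf : ¬ Z.mem (Sh.base f) := fun hm =>
      h (Z.comp_right (Sh.base f) (Sh.base p.comp) hm)
    have hp : ¬ Z.mem (Sh.base p.comp) := fun hm =>
      h (Z.comp_left (Sh.base f) (Sh.base p.comp) hm)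
    have ih := keyZ Z hdec p hp
    have hsf : 𝒮.homs (Sh.base f) := ((hdec _).1).resolve_right hf
    exact ⟨⟨hsf, ih.1⟩, 𝒮.dom_mem _ hsf, ih.2.2⟩

theorem nmem_map (Z : CatIdeal 𝒰)
    (hdec : ∀ {X Y : 𝒰} (f : X ⟶ Y), (𝒮.homs f ∨ Z.mem f) ∧ ¬ (𝒮.homs f ∧ Z.mem f))
    {n : ℕ} {Xb Yb : Sh (𝔞.restrict 𝒮.incl)}
    (q : Pth (Sh (𝔞.restrict 𝒮.incl)) n Xb Yb) :
    ¬ Z.mem (Sh.base ((q.map (sharpF (restrictProj 𝒮.incl 𝔞))).comp)) := by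
  intro hm
  rw [Pth.comp_map] at hm
  exact (hdec _).2 ⟨(Sh.base q.comp).2, hm⟩

end Lift

section Ext

variable (𝒮 : Subcat 𝒰) {𝔞 : GradedCat k 𝒰} (M : Bimod k 𝔞)

open Classical in
/-- Extension-by-zero of a `𝒱`-cochain to a `𝒰`-cochain. -/
noncomputable def ext {n : ℕ}
    (c' : RawCochain (Bimod.pullback (restrictProj 𝒮.incl 𝔞) M) n) : RawCochain M n :=
  fun X Y p e =>
    if h : AllS 𝒮 p ∧ 𝒮.objs X.1 ∧ 𝒮.objs Y.1 then
      M.cst (lift_comp_eq 𝒮 p h.1 h.2.1 h.2.2)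
        (c' (shLift 𝔞 𝒮 X h.2.1) (shLift 𝔞 𝒮 Y h.2.2) (liftP 𝒮 p h.1 h.2.1 h.2.2)
          (liftE 𝒮 h.1 h.2.1 h.2.2 e))
    else 0

theorem ext_pos {n : ℕ} (c' : RawCochain (Bimod.pullback (restrictProj 𝒮.incl 𝔞) M) n)
    {X Y : Sh 𝔞} {p : Pth (Sh 𝔞) n X Y} {e : PthElts 𝔞 p} (h1 : AllS 𝒮 p)
    (h2 : 𝒮.objs X.1) (h3 : 𝒮.objs Y.1) :
    ext 𝒮 M c' X Y p e = M.cst (lift_comp_eq 𝒮 p h1 h2 h3)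
      (c' (shLift 𝔞 𝒮 X h2) (shLift 𝔞 𝒮 Y h3) (liftP 𝒮 p h1 h2 h3)
        (liftE 𝒮 h1 h2 h3 e)) :=
  dif_pos ⟨h1, h2, h3⟩

theorem ext_neg {n : ℕ} (c' : RawCochain (Bimod.pullback (restrictProj 𝒮.incl 𝔞) M) n)
    {X Y : Sh 𝔞} {p : Pth (Sh 𝔞) n X Y} {e : PthElts 𝔞 p}
    (h : ¬ (AllS 𝒮 p ∧ 𝒮.objs X.1 ∧ 𝒮.objs Y.1)) :
    ext 𝒮 M c' X Y p e = 0 :=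
  dif_neg h

theorem Fstar_ext {n : ℕ}
    (c' : RawCochain (Bimod.pullback (restrictProj 𝒮.incl 𝔞) M) n) :
    Fstar (restrictProj 𝒮.incl 𝔞) M (ext 𝒮 M c') = c' := by
  funext X Y p e
  show M.cst _ (ext 𝒮 M c' _ _ (p.map (sharpF (restrictProj 𝒮.incl 𝔞)))
    (eltsMap (restrictProj 𝒮.incl 𝔞) e)) = c' X Y p e
  rw [ext_pos 𝒮 M c' (allS_map 𝒮 p) X.1.2 Y.1.2]
  refine eq_of_heq ((M.cst_heq _ _).trans ((M.cst_heq _ _).trans ?_))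
  exact rawCongr c' (liftP_map_self 𝒮 p _ _ _) (liftE_self_heq 𝒮 e _ _ _)

/-- Master lemma: extension-by-zero preserves multilinearity. -/
theorem isML_ext :
    ∀ (m : ℕ) (W' : 𝒮.Cat) (B : 𝔞.Obj W'.1) (Y' : Sh (𝔞.restrict 𝒮.incl))
      (v' : W' ⟶ Y'.1)
      (c' : ∀ (Z' : Sh (𝔞.restrict 𝒮.incl)) (q : Pth (Sh (𝔞.restrict 𝒮.incl)) m Y' Z'),
        PthElts (𝔞.restrict 𝒮.incl) q →
        (Bimod.pullback (restrictProj 𝒮.incl 𝔞) M).M (v' ≫ Sh.base q.comp) B Z'.2)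
      (_hc' : IsML (Bimod.pullback (restrictProj 𝒮.incl 𝔞) M) c')
      (d : ∀ (Z : Sh 𝔞)
        (q : Pth (Sh 𝔞) m ((sharpF (restrictProj 𝒮.incl 𝔞)).obj Y') Z)
        (_e : PthElts 𝔞 q), M.M (𝒮.incl.map v' ≫ Sh.base q.comp) B Z.2)
      (_hcompat : ∀ Z q e (hq : AllS 𝒮 q) (hZ : 𝒮.objs Z.1),
        HEq (d Z q e) (c' (shLift 𝔞 𝒮 Z hZ) (liftP 𝒮 q hq Y'.1.2 hZ)
          (liftE 𝒮 hq Y'.1.2 hZ e)))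
      (_hvan : ∀ Z q e, ¬ (AllS 𝒮 q ∧ 𝒮.objs Z.1) → d Z q e = 0),
      IsML M d
  | 0, _, _, _, _, _, _, _, _, _ => trivial
  | (m + 1), W', B, Y', v', c', hc', d, hcompat, hvan => by
    have hd : ∀ (Z : Sh 𝔞)
        (q : Pth (Sh 𝔞) (m + 1) ((sharpF (restrictProj 𝒮.incl 𝔞)).obj Y') Z)
        (e : PthElts 𝔞 q) (hq : AllS 𝒮 q) (hZ : 𝒮.objs Z.1),
        d Z q e = M.cst (by erw [Functor.map_comp, lift_comp_eq]; rfl)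
          (c' (shLift 𝔞 𝒮 Z hZ) (liftP 𝒮 q hq Y'.1.2 hZ) (liftE 𝒮 hq Y'.1.2 hZ e)) :=
      fun Z q e hq hZ => eq_of_heq ((hcompat Z q e hq hZ).trans (M.cst_heq _ _).symm)
    refine ⟨fun Yc Zc a q e x x' => ?_, fun Yc Zc a q e r x => ?_, fun Yc a x => ?_⟩
    · by_cases h : AllS 𝒮 (Pth.cons a q) ∧ 𝒮.objs Zc.1
      · erw [hd _ _ _ h.1 h.2, hd _ _ _ h.1 h.2, hd _ _ _ h.1 h.2, ← M.cst_add]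
        congr 1
        exact hc'.1 (shLift 𝔞 𝒮 Yc (𝒮.cod_mem _ h.1.1)) (shLift 𝔞 𝒮 Zc h.2)
          ⟨Sh.base a, h.1.1⟩ (liftP 𝒮 q h.1.2 _ h.2) (liftE 𝒮 h.1.2 _ h.2 e) x x'
      · erw [hvan _ _ _ h, hvan _ _ _ h, hvan _ _ _ h, add_zero]
    · by_cases h : AllS 𝒮 (Pth.cons a q) ∧ 𝒮.objs Zc.1
      · erw [hd _ _ _ h.1 h.2, hd _ _ _ h.1 h.2, ← M.cst_smul]
        congr 1
        exact hc'.2.1 (shLift 𝔞 𝒮 Yc (𝒮.cod_mem _ h.1.1)) (shLift 𝔞 𝒮 Zc h.2)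
          ⟨Sh.base a, h.1.1⟩ (liftP 𝒮 q h.1.2 _ h.2) (liftE 𝒮 h.1.2 _ h.2 e) r x
      · erw [hvan _ _ _ h, hvan _ _ _ h]; exact (smul_zero (A := (M.M _ B Zc.snd)) r).symm
    · by_cases ha : 𝒮.homs (Sh.base a)
      · refine isML_ext m W' B (shLift 𝔞 𝒮 Yc (𝒮.cod_mem _ ha))
          (v' ≫ (⟨Sh.base a, ha⟩ : Y'.1 ⟶ (⟨Yc.1, 𝒮.cod_mem _ ha⟩ : 𝒮.Cat))) _
          (hc'.2.2 (shLift 𝔞 𝒮 Yc (𝒮.cod_mem _ ha)) ⟨Sh.base a, ha⟩ x) _ ?_ ?_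
        · intro Z q e hq hZ
          refine (M.cst_heq _ _).trans ?_
          refine (hcompat Z (Pth.cons a q) (PthElts.cons x e) ⟨ha, hq⟩ hZ).trans ?_
          exact ((Bimod.pullback (restrictProj 𝒮.incl 𝔞) M).cst_heq _ _).symm
        · intro Z q e hcon
          show M.cst _ (d Z (Pth.cons a q) (PthElts.cons x e)) = 0
          erw [hvan Z (Pth.cons a q) (PthElts.cons x e)
            (fun hh => hcon ⟨hh.1.2, hh.2⟩), M.cst_zero]
      · have h0 := isML_zero M m (W := W'.1) (B := B)
          (Y := Yc) (v := 𝒮.incl.map v' ≫ Sh.base a)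
        refine (iff_of_eq (congrArg (IsML M) ?_)).mpr h0
        funext Z q e
        erw [hvan Z (Pth.cons a q) (PthElts.cons x e) (fun hh => ha hh.1.1), M.cst_zero]; rfl

theorem isCochain_ext {n : ℕ}
    (c' : RawCochain (Bimod.pullback (restrictProj 𝒮.incl 𝔞) M) n)
    (hc' : IsCochain (Bimod.pullback (restrictProj 𝒮.incl 𝔞) M) c') :
    IsCochain M (ext 𝒮 M c') := by
  intro X
  by_cases hX : 𝒮.objs X.1
  · refine isML_ext 𝒮 M n ⟨X.1, hX⟩ X.2 (shLift 𝔞 𝒮 X hX) (𝟙 _) _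
      (hc' (shLift 𝔞 𝒮 X hX)) _ ?_ ?_
    · intro Z q e hq hZ
      dsimp only [toRel]
      refine (M.cst_heq _ _).trans ?_
      rw [ext_pos 𝒮 M c' (X := X) (Y := Z) (p := q) (e := e) hq hX hZ]
      refine (M.cst_heq _ _).trans ?_
      exact ((Bimod.pullback (restrictProj 𝒮.incl 𝔞) M).cst_heq _ _).symm
    · intro Z q e hcon
      show M.cst _ (ext 𝒮 M c' X Z q e) = 0
      rw [ext_neg 𝒮 M c' (X := X) (Y := Z) (p := q) (e := e) (fun hh => hcon ⟨hh.1, hh.2.2⟩), M.cst_zero]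
  · have h0 := isML_zero M n (W := X.1) (B := X.2) (Y := X) (v := 𝟙 X.1)
    convert h0 using 2
    rename_i Z
    funext q e
    dsimp only [toRel]
    rw [ext_neg 𝒮 M c' (X := X) (Y := Z) (p := q) (e := e) (fun hh => hX hh.2.1), M.cst_zero]

end Ext

section Theta

variable (𝒮 : Subcat 𝒰) {𝔞 : GradedCat k 𝒰} (M : Bimod k 𝔞) (Z : CatIdeal 𝒰)

/-- The canonical map `C(𝔞, M_𝒱) → C(𝔟, M^φ)`. -/
noncomputable def theta {n : ℕ} (c' : RawCochain (M.quotBimod Z) n) :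
    RawCochain (Bimod.pullback (restrictProj 𝒮.incl 𝔞) M) n :=
  Fstar (restrictProj 𝒮.incl 𝔞) M (fun X Y p e => M.lower Z (c' X Y p e))

variable (hdec : ∀ {X Y : 𝒰} (f : X ⟶ Y), (𝒮.homs f ∨ Z.mem f) ∧ ¬ (𝒮.homs f ∧ Z.mem f))

include hdec in
theorem theta_quotOnto {n : ℕ} (c : RawCochain M n) :
    theta 𝒮 M Z (quotOnto M Z c) = Fstar (restrictProj 𝒮.incl 𝔞) M c := by
  funext X Y p e
  dsimp only [theta, Fstar, quotOnto]
  rw [M.lower_mk Z (nmem_map 𝒮 Z hdec p)]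

include hdec in
theorem theta_inj {n : ℕ} {c₁ c₂ : RawCochain (M.quotBimod Z) n}
    (h : theta 𝒮 M Z c₁ = theta 𝒮 M Z c₂) : c₁ = c₂ := by
  funext X Y p e
  by_cases hm : Z.mem (Sh.base p.comp)
  · exact M.quot_subsingleton Z hm _ _
  · obtain ⟨hp, hX, hY⟩ := keyZ 𝒮 Z hdec p hm
    have h1 := congrFun (congrFun (congrFun (congrFun h (shLift 𝔞 𝒮 X hX))
      (shLift 𝔞 𝒮 Y hY)) (liftP 𝒮 p hp hX hY)) (liftE 𝒮 hp hX hY e)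
    dsimp only [theta, Fstar] at h1
    have h2 := M.cst_inj _ h1
    have h3 := M.lower_inj Z (nmem_map 𝒮 Z hdec (liftP 𝒮 p hp hX hY)) h2
    have h4 : HEq (c₁ X Y
        ((liftP 𝒮 p hp hX hY).map (sharpF (restrictProj 𝒮.incl 𝔞)))
        (eltsMap (restrictProj 𝒮.incl 𝔞) (liftE 𝒮 hp hX hY e))) (c₁ X Y p e) :=
      rawCongr c₁ (liftP_map 𝒮 p hp hX hY) (liftE_heq 𝒮 hp hX hY e)
    have h5 : HEq (c₂ X Y
        ((liftP 𝒮 p hp hX hY).map (sharpF (restrictProj 𝒮.incl 𝔞)))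
        (eltsMap (restrictProj 𝒮.incl 𝔞) (liftE 𝒮 hp hX hY e))) (c₂ X Y p e) :=
      rawCongr c₂ (liftP_map 𝒮 p hp hX hY) (liftE_heq 𝒮 hp hX hY e)
    exact eq_of_heq ((h4.symm.trans (heq_of_eq h3)).trans h5)

theorem isCochain_subInto {n : ℕ} (d : RawCochain (M.subBimod Z) n)
    (hd : IsCochain (M.subBimod Z) d) : IsCochain M (subInto M Z d) := by
  intro X
  have h := isML_map (M := M.subBimod Z) (N := M) (fun m => m.1) (by intros; rfl)
    (by intros; rfl) (by intros; erw [M.cst_val Z]) n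
    (toRel (M.subBimod Z) d X) (hd X)
  convert h using 2
  funext q e
  dsimp only [toRel, subInto]
  rw [M.cst_val Z]

include hdec in
theorem fstar_subInto_zero {n : ℕ} (d : RawCochain (M.subBimod Z) n) :
    Fstar (restrictProj 𝒮.incl 𝔞) M (subInto M Z d) = 0 := by
  funext X Y p e
  show M.cst _ ((d _ _ (p.map (sharpF (restrictProj 𝒮.incl 𝔞)))
    (eltsMap (restrictProj 𝒮.incl 𝔞) e)).1) = 0
  erw [(Submodule.eq_bot_iff _).mp (M.zSub_eq_bot Z (nmem_map 𝒮 Z hdec p)) _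
    (d _ _ (p.map (sharpF (restrictProj 𝒮.incl 𝔞)))
      (eltsMap (restrictProj 𝒮.incl 𝔞) e)).2, M.cst_zero]

include hdec in
theorem mem_zSub_of_fstar_zero {n : ℕ} (c : RawCochain M n)
    (hF : Fstar (restrictProj 𝒮.incl 𝔞) M c = 0) (X Y : Sh 𝔞) (p : Pth (Sh 𝔞) n X Y)
    (e : PthElts 𝔞 p) : c X Y p e ∈ M.zSub Z (Sh.base p.comp) X.2 Y.2 := by
  by_cases hm : Z.mem (Sh.base p.comp)
  · rw [M.zSub_eq_top Z hm]
    exact Submodule.mem_top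
  · obtain ⟨hp, hX, hY⟩ := keyZ 𝒮 Z hdec p hm
    have h1 : Fstar (restrictProj 𝒮.incl 𝔞) M c (shLift 𝔞 𝒮 X hX) (shLift 𝔞 𝒮 Y hY)
        (liftP 𝒮 p hp hX hY) (liftE 𝒮 hp hX hY e) = 0 := by rw [hF]; rfl
    have h2 : c X Y ((liftP 𝒮 p hp hX hY).map (sharpF (restrictProj 𝒮.incl 𝔞)))
        (eltsMap (restrictProj 𝒮.incl 𝔞) (liftE 𝒮 hp hX hY e)) = 0 :=
      M.cst_eq_zero _ h1
    have hcp : Sh.base ((liftP 𝒮 p hp hX hY).map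
        (sharpF (restrictProj 𝒮.incl 𝔞))).comp = Sh.base p.comp := by
      rw [liftP_map 𝒮 p hp hX hY]; rfl
    have h3 : c X Y p e = M.cst hcp (c X Y
        ((liftP 𝒮 p hp hX hY).map (sharpF (restrictProj 𝒮.incl 𝔞)))
        (eltsMap (restrictProj 𝒮.incl 𝔞) (liftE 𝒮 hp hX hY e))) :=
      eq_of_heq ((rawCongr c (liftP_map 𝒮 p hp hX hY)
        (liftE_heq 𝒮 hp hX hY e)).symm.trans (M.cst_heq hcp _).symm)
    erw [h3, h2, M.cst_zero]
    exact Submodule.zero_mem _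

theorem isCochain_sub_of {n : ℕ} (c : RawCochain M n) (hc : IsCochain M c)
    (hmem : ∀ X Y p e, c X Y p e ∈ M.zSub Z (Sh.base p.comp) X.2 Y.2) :
    IsCochain (M.subBimod Z)
      (fun X Y p e => (⟨c X Y p e, hmem X Y p e⟩ : (M.subBimod Z).M _ X.2 Y.2)) := by
  intro X
  refine isML_map_inj (M := M.subBimod Z) (N := M) (fun m => m.1) (by intros; rfl)
    (by intros; rfl) (by intros; erw [M.cst_val Z])
    (fun h => Subtype.ext h) n _ ?_
  convert hc X using 2
  funext q e
  dsimp only [toRel]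
  erw [M.cst_val Z]

theorem isCochain_quotOnto {n : ℕ} (c : RawCochain M n) (hc : IsCochain M c) :
    IsCochain (M.quotBimod Z) (quotOnto M Z c) := by
  intro X
  have h := isML_map (M := M) (N := M.quotBimod Z) (fun m => Submodule.Quotient.mk m)
    (by intros; rfl) (by intros; rfl) (by intros; erw [M.cst_mk Z]) n
    (toRel M c X) (hc X)
  refine (iff_of_eq (congrArg (IsML _) ?_)).mpr h
  funext Z' q e
  dsimp only [toRel, quotOnto]
  erw [M.cst_mk Z]

theorem isCochain_lower {n : ℕ} (c' : RawCochain (M.quotBimod Z) n)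
    (hc' : IsCochain (M.quotBimod Z) c') :
    IsCochain M (fun X Y p e => M.lower Z (c' X Y p e)) := by
  intro X
  have h := isML_map (M := M.quotBimod Z) (N := M) (fun m => M.lower Z m)
    (fun a b => M.lower_add Z a b) (fun r a => M.lower_smul Z r a)
    (by intros; erw [M.lower_cst Z]) n
    (toRel (M.quotBimod Z) c' X) (hc' X)
  convert h using 2
  funext q e
  dsimp only [toRel]
  rw [M.lower_cst Z]

theorem quotOnto_lower {n : ℕ} (c' : RawCochain (M.quotBimod Z) n) :
    quotOnto M Z (fun X Y p e => M.lower Z (c' X Y p e)) = c' := by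
  funext X Y p e
  by_cases hm : Z.mem (Sh.base p.comp)
  · exact M.quot_subsingleton Z hm _ _
  · exact M.mk_lower Z hm _

end Theta

end Aux
/-- Let `(𝒵, 𝒱)` be an ideal-subcategory decomposition of `𝒰`, `𝔞` a `𝒰`-graded
category, `𝔟 = 𝔞^φ` for the inclusion `φ : 𝒱 ⊆ 𝒰`, and `M` an `𝔞`-bimodule; let
`M_𝒵 ⊆ M` be the sub-bimodule with values `M_u` for `u ∈ 𝒵` and `0` otherwise (a
sub-bimodule because `𝒵` is an ideal), and `M_𝒱 = M / M_𝒵`.  Then the restriction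
`φ* : C_𝒰(𝔞, M) → C_𝒱(𝔟, M^φ)` is surjective, and the short exact sequence of
complexes `0 → C_𝒰(𝔞, M_𝒵) → C_𝒰(𝔞, M) → C_𝒰(𝔞, M_𝒱) → 0` induced by
`0 → M_𝒵 → M → M_𝒱 → 0` is canonically isomorphic to the sequence
`0 → ker(φ*) → C_𝒰(𝔞, M) → C_𝒱(𝔟, M^φ) → 0`.  In particular
`C_𝒰(𝔞, M_𝒵) ≅ C_{𝒰∖𝒱}(𝔞, M) := ker(φ*)` and `C_𝒰(𝔞, M_𝒱) ≅ C_𝒱(𝔟, M^φ)`. -/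
theorem statement16 {k : Type u} [CommRing k] {𝒰 : Type u} [Category.{u} 𝒰]
    (𝔞 : GradedCat k 𝒰) (Z : CatIdeal 𝒰) (𝒮 : Subcat 𝒰)
    (hdec : ∀ {X Y : 𝒰} (f : X ⟶ Y), (𝒮.homs f ∨ Z.mem f) ∧ ¬ (𝒮.homs f ∧ Z.mem f))
    (M : Bimod k 𝔞) (n : ℕ) :
    -- surjectivity of `φ* : Cⁿ_𝒰(𝔞, M) → Cⁿ_𝒱(𝔟, M^φ)`
    (∀ c' : RawCochain (Bimod.pullback (restrictProj 𝒮.incl 𝔞) M) n,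
      IsCochain (Bimod.pullback (restrictProj 𝒮.incl 𝔞) M) c' →
      ∃ c : RawCochain M n, IsCochain M c ∧ Fstar (restrictProj 𝒮.incl 𝔞) M c = c') ∧
    -- `ν : C_𝒰(𝔞, M_𝒵) → C_𝒰(𝔞, M)` is an injective chain map whose image consists of
    -- the Hochschild cochains killed by `φ*`, i.e. `C_𝒰(𝔞, M_𝒵) ≅ ker (φ*)`
    (∀ c c' : RawCochain (M.subBimod Z) n, IsCochain (M.subBimod Z) c →
      IsCochain (M.subBimod Z) c' → subInto M Z c = subInto M Z c' → c = c') ∧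
    (∀ d : RawCochain (M.subBimod Z) n, IsCochain (M.subBimod Z) d →
      IsCochain M (subInto M Z d) ∧
        Fstar (restrictProj 𝒮.incl 𝔞) M (subInto M Z d) = 0) ∧
    (∀ c : RawCochain M n, IsCochain M c →
      Fstar (restrictProj 𝒮.incl 𝔞) M c = 0 →
      ∃ d : RawCochain (M.subBimod Z) n, IsCochain (M.subBimod Z) d ∧
        subInto M Z d = c) ∧
    (∀ d : RawCochain (M.subBimod Z) n,
      subInto M Z (dRaw (M.subBimod Z) d) = dRaw M (subInto M Z d)) ∧
    -- `π : C_𝒰(𝔞, M) → C_𝒰(𝔞, M_𝒱)` is a surjective chain map with kernel the image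
    -- of `ν`
    (∀ c : RawCochain M n, IsCochain M c → IsCochain (M.quotBimod Z) (quotOnto M Z c)) ∧
    (∀ c' : RawCochain (M.quotBimod Z) n, IsCochain (M.quotBimod Z) c' →
      ∃ c : RawCochain M n, IsCochain M c ∧ quotOnto M Z c = c') ∧
    (∀ c : RawCochain M n, IsCochain M c →
      (quotOnto M Z c = 0 ↔
        ∃ d : RawCochain (M.subBimod Z) n, IsCochain (M.subBimod Z) d ∧
          subInto M Z d = c)) ∧
    (∀ c : RawCochain M n,
      quotOnto M Z (dRaw M c) = dRaw (M.quotBimod Z) (quotOnto M Z c)) ∧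
    -- the canonical isomorphism `C_𝒰(𝔞, M_𝒱) ≅ C_𝒱(𝔟, M^φ)`, compatible with the
    -- projections from `C_𝒰(𝔞, M)`
    (∃ θ : RawCochain (M.quotBimod Z) n →
        RawCochain (Bimod.pullback (restrictProj 𝒮.incl 𝔞) M) n,
      (∀ c : RawCochain M n, θ (quotOnto M Z c) = Fstar (restrictProj 𝒮.incl 𝔞) M c) ∧
      (∀ c c' : RawCochain (M.quotBimod Z) n, IsCochain (M.quotBimod Z) c →
        IsCochain (M.quotBimod Z) c' → θ c = θ c' → c = c') ∧
      (∀ c' : RawCochain (Bimod.pullback (restrictProj 𝒮.incl 𝔞) M) n,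
        IsCochain (Bimod.pullback (restrictProj 𝒮.incl 𝔞) M) c' →
        ∃ c : RawCochain (M.quotBimod Z) n, IsCochain (M.quotBimod Z) c ∧ θ c = c')) := by
  refine ⟨?_, ?_, ?_, ?_, ?_, ?_, ?_, ?_, ?_, ?_⟩
  · exact fun c' hc' => ⟨ext 𝒮 M c', isCochain_ext 𝒮 M c' hc', Fstar_ext 𝒮 M c'⟩
  · intro c c' _ _ h
    funext X Y p e
    exact Subtype.ext (congrFun (congrFun (congrFun (congrFun h X) Y) p) e)
  · exact fun d hd => ⟨isCochain_subInto M Z d hd, fstar_subInto_zero 𝒮 M Z hdec d⟩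
  · intro c hc hF
    exact ⟨fun X Y p e => ⟨c X Y p e, mem_zSub_of_fstar_zero 𝒮 M Z hdec c hF X Y p e⟩,
      isCochain_sub_of M Z c hc _, rfl⟩
  · exact fun d => subInto_dRaw M Z d
  · exact fun c hc => isCochain_quotOnto M Z c hc
  · intro c' hc'
    exact ⟨fun X Y p e => M.lower Z (c' X Y p e), isCochain_lower M Z c' hc',
      quotOnto_lower M Z c'⟩
  · intro c hc
    constructor
    · intro h0
      have hmem : ∀ X Y p e, c X Y p e ∈ M.zSub Z (Sh.base p.comp) X.2 Y.2 :=
        fun X Y p e => (Submodule.Quotient.mk_eq_zero _).mp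
          (congrFun (congrFun (congrFun (congrFun h0 X) Y) p) e)
      exact ⟨_, isCochain_sub_of M Z c hc hmem, rfl⟩
    · rintro ⟨d, _, rfl⟩
      funext X Y p e
      exact (Submodule.Quotient.mk_eq_zero _).mpr (d X Y p e).2
  · exact fun c => quotOnto_dRaw M Z c
  · refine ⟨theta 𝒮 M Z, fun c => theta_quotOnto 𝒮 M Z hdec c,
      fun c c' _ _ h => theta_inj 𝒮 M Z hdec h, fun c' hc' => ?_⟩
    exact ⟨quotOnto M Z (ext 𝒮 M c'),
      isCochain_quotOnto M Z _ (isCochain_ext 𝒮 M c' hc'),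
      by rw [theta_quotOnto 𝒮 M Z hdec, Fstar_ext]⟩

end MapGr
end
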